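/- arXiv:0807.2611 — 5 statements merged into one kernel-verified Lean document; each statement's English description precedes it below -/
import Mathlib

section
/- Let ρ be a probability measure on the positive integers satisfying ρ(n) ≤ C·n^{-α} for all n ≥ 1, with C < ∞ and α ∈ (1,∞). Then for every m, n ≥ 1, the m-fold convolution satisfies ρ^{*m}(n) ≤ (max(C,1))·m^{α+1}·n^{-α}. -/
open scoped Classical

noncomputable section

/-- The `m`-fold convolution of `ρ` on the positive integers:
`ρ^{*m}(n) = ∑_{x_1+⋯+x_m = n, x_i ≥ 1} ∏_i ρ(x_i)`. -/
def convPow (ρ : ℕ → ℝ) (m n : ℕ) : ℝ :=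
  ∑' x : Fin m → ℕ,
    if (∀ i, 1 ≤ x i) ∧ (∑ i, x i) = n then ∏ i, ρ (x i) else 0

set_option maxHeartbeats 1000000 in
/-- **Convolution preserves a polynomial tail**: if `ρ(n) ≤ C n^{-α}` for all `n ≥ 1`,
then `ρ^{*m}(n) ≤ (C ∨ 1) m^{α+1} n^{-α}` for all `m, n ≥ 1`. -/
theorem convPow_tail_bound
    (ρ : ℕ → ℝ) (hρ0 : ρ 0 = 0) (hρnonneg : ∀ n, 0 ≤ ρ n)
    (hρsum : ∑' n : ℕ, ρ n = 1)
    (C α : ℝ) (hα : 1 < α)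
    (htail : ∀ n : ℕ, 1 ≤ n → ρ n ≤ C * (n : ℝ) ^ (-α))
    (m n : ℕ) (hm : 1 ≤ m) (hn : 1 ≤ n) :
    convPow ρ m n ≤ (max C 1) * (m : ℝ) ^ (α + 1) * (n : ℝ) ^ (-α) := by
  classical
  set C' : ℝ := max C 1 with hC'def
  have hC'1 : (1:ℝ) ≤ C' := le_max_right _ _
  have hC'0 : (0:ℝ) ≤ C' := by linarith
  have hCC' : C ≤ C' := le_max_left _ _
  have hρsummable : Summable ρ := by
    by_contra h
    rw [tsum_eq_zero_of_not_summable h] at hρsum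
    norm_num at hρsum
  have hpartial : ∀ s : Finset ℕ, ∑ k ∈ s, ρ k ≤ 1 := by
    intro s
    rw [← hρsum]
    exact Summable.sum_le_tsum s (fun k _ => hρnonneg k) hρsummable
  have hmpos : (0:ℝ) < (m:ℝ) := by exact_mod_cast hm
  have hnpos : (0:ℝ) < (n:ℝ) := by exact_mod_cast hn
  set K : ℝ := C' * ((m:ℝ) ^ α * (n:ℝ) ^ (-α)) with hKdef
  have hK0 : 0 ≤ K := by positivity
  -- the finite support
  set A : Finset (Fin m → ℕ) := Fintype.piFinset fun _ => Finset.range (n+1) with hAdef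
  set f : (Fin m → ℕ) → ℝ := fun x =>
    if (∀ i, 1 ≤ x i) ∧ (∑ i, x i) = n then ∏ i, ρ (x i) else 0 with hfdef
  have hconv : convPow ρ m n = ∑ x ∈ A, f x := by
    apply tsum_eq_sum
    intro x hx
    rw [if_neg]
    rintro ⟨h1, h2⟩
    apply hx
    rw [hAdef, Fintype.mem_piFinset]
    intro i
    rw [Finset.mem_range]
    have : x i ≤ ∑ j, x j := Finset.single_le_sum (fun j _ => Nat.zero_le _) (Finset.mem_univ i)
    omega
  set g : Fin m → (Fin m → ℕ) → ℝ := fun i x =>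
    if ((∀ j, 1 ≤ x j) ∧ (∑ j, x j) = n) ∧ n ≤ m * x i then ∏ j, ρ (x j) else 0 with hgdef
  have hg0 : ∀ i x, 0 ≤ g i x := by
    intro i x
    rw [hgdef]
    simp only
    split
    · exact Finset.prod_nonneg fun j _ => hρnonneg _
    · exact le_rfl
  have hpigeon : ∀ x : Fin m → ℕ, (∑ j, x j) = n → ∃ i, n ≤ m * x i := by
    intro x hx
    by_contra h
    push_neg at h
    have h1 : ∑ i : Fin m, (m * x i + 1) ≤ ∑ _i : Fin m, n :=
      Finset.sum_le_sum fun i _ => by have := h i; omega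
    rw [Finset.sum_add_distrib, ← Finset.mul_sum, hx] at h1
    simp only [Finset.sum_const, Finset.card_univ, Fintype.card_fin, smul_eq_mul,
      mul_one] at h1
    omega
  have hfg : ∀ x, f x ≤ ∑ i, g i x := by
    intro x
    by_cases hP : (∀ j, 1 ≤ x j) ∧ (∑ j, x j) = n
    · obtain ⟨i₀, hi₀⟩ := hpigeon x hP.2
      have hfx : f x = g i₀ x := by
        rw [hfdef, hgdef]
        simp only
        rw [if_pos hP, if_pos ⟨hP, hi₀⟩]
      rw [hfx]
      exact Finset.single_le_sum (fun i _ => hg0 i x) (Finset.mem_univ i₀)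
    · have hfx : f x = 0 := by rw [hfdef]; simp only; rw [if_neg hP]
      rw [hfx]
      exact Finset.sum_nonneg fun i _ => hg0 i x
  have hgsum : ∀ i : Fin m, ∑ x ∈ A, g i x ≤ K := by
    intro i
    set B : Finset (Fin m → ℕ) :=
      A.filter (fun x => ((∀ j, 1 ≤ x j) ∧ (∑ j, x j) = n) ∧ n ≤ m * x i) with hBdef
    have hAB : ∑ x ∈ A, g i x = ∑ x ∈ B, ∏ j, ρ (x j) := by
      rw [hBdef, Finset.sum_filter]
    rw [hAB]
    have hρK : ∀ x ∈ B, ρ (x i) ≤ K := by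
      intro x hx
      rw [hBdef, Finset.mem_filter] at hx
      obtain ⟨-, ⟨hx1, hxs⟩, hxi⟩ := hx
      have hxi1 : 1 ≤ x i := hx1 i
      have hxipos : (0:ℝ) < ((x i : ℕ) : ℝ) := by exact_mod_cast hxi1
      have h1 : (n:ℝ) ^ α ≤ (m:ℝ) ^ α * ((x i : ℕ) : ℝ) ^ α := by
        rw [← Real.mul_rpow hmpos.le hxipos.le]
        apply Real.rpow_le_rpow hnpos.le _ (by linarith)
        exact_mod_cast hxi
      have h2 : ((x i : ℕ) : ℝ) ^ (-α) ≤ (m:ℝ) ^ α * (n:ℝ) ^ (-α) := by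
        have hxa : (0:ℝ) < ((x i : ℕ) : ℝ) ^ α := Real.rpow_pos_of_pos hxipos α
        have hna : (0:ℝ) < (n:ℝ) ^ α := Real.rpow_pos_of_pos hnpos α
        rw [Real.rpow_neg hxipos.le, Real.rpow_neg hnpos.le, ← one_div, ← div_eq_mul_inv,
          div_le_div_iff₀ hxa hna]
        nlinarith [h1]
      calc ρ (x i) ≤ C * ((x i : ℕ) : ℝ) ^ (-α) := htail _ hxi1
        _ ≤ C' * ((m:ℝ) ^ α * (n:ℝ) ^ (-α)) :=
            mul_le_mul hCC' h2 (by positivity) hC'0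
        _ = K := hKdef.symm
    have hstep : ∑ x ∈ B, ∏ j, ρ (x j)
        ≤ K * ∑ x ∈ B, ∏ j ∈ Finset.univ.erase i, ρ (x j) := by
      rw [Finset.mul_sum]
      apply Finset.sum_le_sum
      intro x hx
      rw [← Finset.mul_prod_erase Finset.univ _ (Finset.mem_univ i)]
      exact mul_le_mul_of_nonneg_right (hρK x hx)
        (Finset.prod_nonneg fun j _ => hρnonneg _)
    have hrest : ∑ x ∈ B, ∏ j ∈ Finset.univ.erase i, ρ (x j) ≤ 1 := by
      set φ : (Fin m → ℕ) → (Fin m → ℕ) := fun x j => if j = i then 0 else x j with hφ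
      set A' : Finset (Fin m → ℕ) :=
        Fintype.piFinset (fun j => if j = i then {0} else Finset.range (n+1)) with hA'
      have hinj : ∀ x ∈ B, ∀ y ∈ B, φ x = φ y → x = y := by
        intro x hx y hy hxy
        rw [hBdef, Finset.mem_filter] at hx hy
        have hxy' : ∀ j, j ≠ i → x j = y j := by
          intro j hj
          have := congrFun hxy j
          simpa [hφ, hj] using this
        funext j
        by_cases hj : j = i
        · subst hj
          have hx' := hx.2.1.2
          have hy' := hy.2.1.2
          have hxsum : x j + ∑ k ∈ Finset.univ.erase j, x k = n := by
            rw [Finset.add_sum_erase _ _ (Finset.mem_univ j)]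
            exact hx'
          have hysum : y j + ∑ k ∈ Finset.univ.erase j, y k = n := by
            rw [Finset.add_sum_erase _ _ (Finset.mem_univ j)]
            exact hy'
          have heq : ∑ k ∈ Finset.univ.erase j, x k = ∑ k ∈ Finset.univ.erase j, y k :=
            Finset.sum_congr rfl fun k hk => hxy' k (Finset.ne_of_mem_erase hk)
          omega
        · exact hxy' j hj
      have himg : ∑ x ∈ B, ∏ j ∈ Finset.univ.erase i, ρ (x j)
          = ∑ z ∈ B.image φ, ∏ j ∈ Finset.univ.erase i, ρ (z j) := by
        rw [Finset.sum_image hinj]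
        apply Finset.sum_congr rfl
        intro x _
        apply Finset.prod_congr rfl
        intro j hj
        have hj' : j ≠ i := Finset.ne_of_mem_erase hj
        simp [hφ, hj']
      have hsub : B.image φ ⊆ A' := by
        intro z hz
        rw [Finset.mem_image] at hz
        obtain ⟨x, hx, rfl⟩ := hz
        have hxA : x ∈ A := Finset.mem_of_mem_filter x hx
        rw [hA', Fintype.mem_piFinset]
        intro j
        by_cases hj : j = i
        · simp [hφ, hj]
        · have : x j ∈ Finset.range (n+1) := by
            rw [hAdef, Fintype.mem_piFinset] at hxA
            exact hxA j
          simp only [hφ, if_neg hj]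
          simpa [hj] using this
      have hA'sum : ∑ z ∈ A', ∏ j ∈ Finset.univ.erase i, ρ (z j) ≤ 1 := by
        have hzeq : ∀ z : Fin m → ℕ, ∏ j ∈ Finset.univ.erase i, ρ (z j)
            = ∏ j, (if j = i then 1 else ρ (z j)) := by
          intro z
          rw [← Finset.mul_prod_erase Finset.univ _ (Finset.mem_univ i), if_pos rfl, one_mul]
          exact Finset.prod_congr rfl fun j hj => by rw [if_neg (Finset.ne_of_mem_erase hj)]
        calc ∑ z ∈ A', ∏ j ∈ Finset.univ.erase i, ρ (z j)
            = ∑ z ∈ A', ∏ j, (fun j k => if j = i then 1 else ρ k) j (z j) := by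
              apply Finset.sum_congr rfl
              intro z _
              exact hzeq z
          _ = ∏ j, ∑ k ∈ (if j = i then {0} else Finset.range (n+1)),
                (if j = i then (1:ℝ) else ρ k) := by
              rw [hA']
              exact (Finset.prod_univ_sum
                (fun j => if j = i then ({0} : Finset ℕ) else Finset.range (n+1))
                (fun j k => if j = i then (1:ℝ) else ρ k)).symm
          _ ≤ 1 := by
              apply Finset.prod_le_one
              · intro j _
                by_cases hj : j = i
                · simp [hj]
                · simp only [if_neg hj]
                  exact Finset.sum_nonneg fun k _ => hρnonneg k
              · intro j _
                by_cases hj : j = i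
                · simp [hj]
                · simp only [if_neg hj]
                  exact hpartial _
      calc ∑ x ∈ B, ∏ j ∈ Finset.univ.erase i, ρ (x j)
          = ∑ z ∈ B.image φ, ∏ j ∈ Finset.univ.erase i, ρ (z j) := himg
        _ ≤ ∑ z ∈ A', ∏ j ∈ Finset.univ.erase i, ρ (z j) :=
            Finset.sum_le_sum_of_subset_of_nonneg hsub
              (fun z _ _ => Finset.prod_nonneg fun j _ => hρnonneg _)
        _ ≤ 1 := hA'sum
    calc ∑ x ∈ B, ∏ j, ρ (x j)
        ≤ K * ∑ x ∈ B, ∏ j ∈ Finset.univ.erase i, ρ (x j) := hstep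
      _ ≤ K * 1 := mul_le_mul_of_nonneg_left hrest hK0
      _ = K := mul_one K
  calc convPow ρ m n = ∑ x ∈ A, f x := hconv
    _ ≤ ∑ x ∈ A, ∑ i, g i x := Finset.sum_le_sum fun x _ => hfg x
    _ = ∑ i, ∑ x ∈ A, g i x := Finset.sum_comm
    _ ≤ ∑ _i : Fin m, K := Finset.sum_le_sum fun i _ => hgsum i
    _ = (m:ℝ) * K := by
        rw [Finset.sum_const, Finset.card_univ, Fintype.card_fin, nsmul_eq_mul]
    _ = C' * (m:ℝ) ^ (α + 1) * (n:ℝ) ^ (-α) := by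
        rw [hKdef, Real.rpow_add hmpos, Real.rpow_one]
        ring

end
end

section
/- Let (ω_l)_{l∈ℕ} be i.i.d. Bernoulli(p) random variables with p ∈ (0,1), α ∈ (1,∞), and for N ∈ ℕ define S_N(ω) = ∑_{0<j_1<...<j_N, ω_{j_1}=...=ω_{j_N}=1} ∏_{i=1}^N (j_i - j_{i-1})^{-α} (with j_0=0). Then for any β ∈ (1/α, 1], the fractional moment satisfies E[S_N(ω)^β] ≤ (p·ζ(αβ))^N, where ζ is the Riemann zeta function. -/
open MeasureTheory ProbabilityTheory Filter
open scoped ENNReal Classical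

noncomputable section

/-- `j_{i-1}`, with the convention `j_0 = 0`. -/
def prevJ {N : ℕ} (j : Fin N → ℕ) (i : Fin N) : ℕ :=
  if h : (i : ℕ) = 0 then 0
  else j ⟨(i : ℕ) - 1, lt_of_le_of_lt (Nat.sub_le _ _) i.2⟩

/-- The renewal sum `S_N(ω) = ∑_{0<j_1<⋯<j_N, ω_{j_i}=1 ∀i} ∏_i (j_i-j_{i-1})^{-α}`. -/
def SN (α : ℝ) (N : ℕ) (ω : ℕ → Bool) : ℝ≥0∞ :=
  ∑' j : Fin N → ℕ,
    if (∀ i, prevJ j i < j i) ∧ (∀ i, ω (j i) = true)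
    then ∏ i, ((j i - prevJ j i : ℕ) : ℝ≥0∞) ^ (-α) else 0

/-- `ζ(s) = ∑_{n ≥ 1} n^{-s}`, valued in `ℝ≥0∞`. -/
def zetaE (s : ℝ) : ℝ≥0∞ := ∑' n : ℕ, ((n + 1 : ℕ) : ℝ≥0∞) ^ (-s)

lemma prevJ_zero {N : ℕ} (j : Fin N → ℕ) (i : Fin N) (h : (i : ℕ) = 0) :
    prevJ j i = 0 := dif_pos h

lemma prevJ_succ {N : ℕ} (j : Fin N → ℕ) (m : ℕ) (h : m + 1 < N) :
    prevJ j ⟨m + 1, h⟩ = j ⟨m, by omega⟩ := by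
  rw [prevJ, dif_neg (by simp)]
  congr 1

lemma sum_rpow_le {ι : Type*} (s : Finset ι) (f : ι → ℝ≥0∞) {β : ℝ}
    (hβ0 : 0 < β) (hβ1 : β ≤ 1) : (∑ i ∈ s, f i) ^ β ≤ ∑ i ∈ s, (f i) ^ β := by
  classical
  induction s using Finset.cons_induction with
  | empty => simp [ENNReal.zero_rpow_of_pos hβ0]
  | cons a s ha ih =>
    rw [Finset.sum_cons, Finset.sum_cons]
    exact (ENNReal.rpow_add_le_add_rpow _ _ hβ0.le hβ1).trans (add_le_add le_rfl ih)

lemma tsum_rpow_le {ι : Type*} (f : ι → ℝ≥0∞) {β : ℝ} (hβ0 : 0 < β) (hβ1 : β ≤ 1) :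
    (∑' i, f i) ^ β ≤ ∑' i, (f i) ^ β := by
  rw [← ENNReal.le_rpow_inv_iff hβ0, ENNReal.tsum_eq_iSup_sum]
  refine iSup_le fun s => ?_
  rw [ENNReal.le_rpow_inv_iff hβ0]
  exact (sum_rpow_le s f hβ0 hβ1).trans (ENNReal.sum_le_tsum s)

lemma chain_lt {N : ℕ} {j : Fin N → ℕ} (hj : ∀ i, prevJ j i < j i) :
    ∀ d m (h : m + d + 1 < N), j ⟨m, by omega⟩ < j ⟨m + d + 1, h⟩ := by
  intro d
  induction d with
  | zero =>
    intro m h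
    have h2 := hj ⟨m + 1, by omega⟩
    rwa [prevJ_succ j m (by omega)] at h2
  | succ d ih =>
    intro m h
    have h1 := ih m (by omega)
    have h2 := hj ⟨m + d + 1 + 1, by omega⟩
    rw [prevJ_succ j (m + d + 1) (by omega)] at h2
    exact h1.trans h2

lemma chain_inj {N : ℕ} {j : Fin N → ℕ} (hj : ∀ i, prevJ j i < j i) :
    Function.Injective j := by
  have key : ∀ a b : Fin N, (a : ℕ) < (b : ℕ) → j a < j b := by
    intro a b hab
    have := chain_lt hj ((b : ℕ) - (a : ℕ) - 1) (a : ℕ) (by omega)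
    have ha : (⟨(a : ℕ), by omega⟩ : Fin N) = a := rfl
    have hb : (⟨(a : ℕ) + ((b : ℕ) - (a : ℕ) - 1) + 1, by omega⟩ : Fin N) = b := by
      apply Fin.ext; simp; omega
    rwa [ha, hb] at this
  intro a b hab
  by_contra hne
  rcases Nat.lt_or_ge (a : ℕ) (b : ℕ) with h | h
  · exact absurd hab (key a b h).ne
  · have : (b : ℕ) < (a : ℕ) := by
      rcases Nat.eq_or_lt_of_le h with h' | h'
      · exact absurd (Fin.ext h'.symm) hne
      · exact h'
    exact absurd hab.symm (key b a this).ne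

/-- The map from gap variables to chains: `Φ k i = ∑_{t ≤ i} (k t + 1)`. -/
def Phi {N : ℕ} (k : Fin N → ℕ) (i : Fin N) : ℕ :=
  ∑ t ∈ Finset.range ((i : ℕ) + 1), ((if h : t < N then k ⟨t, h⟩ else 0) + 1)

lemma Phi_gap {N : ℕ} (k : Fin N → ℕ) (i : Fin N) :
    Phi k i = prevJ (Phi k) i + (k i + 1) := by
  rcases Nat.eq_zero_or_pos (i : ℕ) with h0 | hpos
  · have hi : i = ⟨0, by omega⟩ := by apply Fin.ext; simpa using h0
    rw [prevJ_zero _ _ h0, Phi, h0, hi]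
    simp only [Finset.range_one, Finset.sum_singleton, zero_add]
    rw [dif_pos (by omega : 0 < N)]
  · obtain ⟨m, hm⟩ : ∃ m, (i : ℕ) = m + 1 := ⟨(i : ℕ) - 1, by omega⟩
    have hi : i = ⟨m + 1, by omega⟩ := Fin.ext hm
    rw [hi, prevJ_succ (Phi k) m (by omega), Phi, Phi]
    simp only
    rw [Finset.sum_range_succ, dif_pos (by omega : m + 1 < N)]

lemma Phi_cond {N : ℕ} (k : Fin N → ℕ) (i : Fin N) : prevJ (Phi k) i < Phi k i := by
  have := Phi_gap k i; omega

lemma Phi_gap_eq {N : ℕ} (k : Fin N → ℕ) (i : Fin N) :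
    Phi k i - prevJ (Phi k) i = k i + 1 := by
  have := Phi_gap k i; omega

lemma Phi_inj {N : ℕ} : Function.Injective (Phi (N := N)) := by
  intro k k' h
  funext i
  have h1 := Phi_gap_eq k i
  have h2 := Phi_gap_eq k' i
  rw [h] at h1
  omega

lemma Phi_surj {N : ℕ} {j : Fin N → ℕ} (hj : ∀ i, prevJ j i < j i) :
    Phi (fun i => j i - prevJ j i - 1) = j := by
  set k : Fin N → ℕ := fun i => j i - prevJ j i - 1 with hk
  have key : ∀ m (h : m < N), Phi k ⟨m, h⟩ = j ⟨m, h⟩ := by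
    intro m
    induction m with
    | zero =>
      intro h
      have hg := Phi_gap k ⟨0, h⟩
      have hj0 := hj ⟨0, h⟩
      rw [prevJ_zero _ _ rfl] at hg
      rw [prevJ_zero _ _ rfl] at hj0
      rw [hg]
      simp only [hk]
      rw [prevJ_zero _ _ rfl]
      omega
    | succ m ih =>
      intro h
      have hg := Phi_gap k ⟨m + 1, h⟩
      have hjm := hj ⟨m + 1, h⟩
      rw [prevJ_succ _ m h, ih (by omega)] at hg
      rw [prevJ_succ _ m h] at hjm
      rw [hg]
      simp only [hk]
      rw [prevJ_succ _ m h]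
      omega
  funext i
  have := key (i : ℕ) i.2
  simpa using this


lemma tsum_pi_prod (g : ℕ → ℝ≥0∞) (N : ℕ) :
    ∑' k : Fin N → ℕ, ∏ i, g (k i) = (∑' n, g n) ^ N := by
  induction N with
  | zero =>
    rw [tsum_eq_single (fun i => i.elim0) (by intro b hb; exact absurd (funext fun i => i.elim0) hb)]
    simp
  | succ N ih =>
    rw [← (Fin.consEquiv (fun _ : Fin (N + 1) => ℕ)).tsum_eq, pow_succ]
    calc ∑' p : ℕ × (Fin N → ℕ), ∏ i, g ((Fin.consEquiv (fun _ => ℕ)) p i)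
        = ∑' p : ℕ × (Fin N → ℕ), g p.1 * ∏ i, g (p.2 i) := by
          congr 1; funext p
          simp [Fin.consEquiv, Fin.prod_univ_succ]
      _ = ∑' (a : ℕ), ∑' (k : Fin N → ℕ), g a * ∏ i, g (k i) := ENNReal.tsum_prod'
      _ = ∑' (a : ℕ), g a * ∑' (k : Fin N → ℕ), ∏ i, g (k i) := by
          congr 1; funext a; exact ENNReal.tsum_mul_left
      _ = (∑' n, g n) ^ N * ∑' n, g n := by
          rw [ih, ENNReal.tsum_mul_right, mul_comm]

lemma sum_chains (q : ℝ) (N : ℕ) :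
    (∑' j : Fin N → ℕ, if ∀ i, prevJ j i < j i
      then ∏ i, ((j i - prevJ j i : ℕ) : ℝ≥0∞) ^ (-q) else 0) = zetaE q ^ N := by
  have h1 : (∑' j : Fin N → ℕ, if ∀ i, prevJ j i < j i
      then ∏ i, ((j i - prevJ j i : ℕ) : ℝ≥0∞) ^ (-q) else 0)
      = ∑' k : Fin N → ℕ, ∏ i, ((k i + 1 : ℕ) : ℝ≥0∞) ^ (-q) := by
    apply tsum_eq_tsum_of_ne_zero_bij (fun x => Phi x.1)
    · intro x y hxy
      exact Subtype.ext (Phi_inj hxy)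
    · intro j hj
      rw [Function.mem_support] at hj
      have hc : ∀ i, prevJ j i < j i := by
        by_contra hc
        simp [if_neg hc] at hj
      refine ⟨⟨fun i => j i - prevJ j i - 1, ?_⟩, Phi_surj hc⟩
      rw [Function.mem_support]
      rw [Finset.prod_ne_zero_iff]
      intro i _
      exact (ENNReal.rpow_pos (by positivity) (by simp)).ne'
    · intro x
      rw [if_pos (Phi_cond x.1)]
      congr 1
      funext i
      rw [Phi_gap_eq]
  rw [h1]
  exact tsum_pi_prod (fun n => ((n + 1 : ℕ) : ℝ≥0∞) ^ (-q)) N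


theorem fractional_moment_bound_aux
    {Ω : Type*} [MeasurableSpace Ω] (μ : Measure Ω) [IsProbabilityMeasure μ]
    (X : ℕ → Ω → Bool)
    (hmeas : ∀ l, Measurable (X l))
    (hindep : iIndepFun X μ)
    (p : ℝ) (hp : p ∈ Set.Ioo (0 : ℝ) 1)
    (hX : ∀ l, μ {a | X l a = true} = ENNReal.ofReal p)
    (α : ℝ) (hα : 1 < α)
    (β : ℝ) (hβ : β ∈ Set.Ioc (1 / α) 1)
    (N : ℕ) :
    ∫⁻ a, ((∑' j : Fin N → ℕ,
      if (∀ i, prevJ j i < j i) ∧ (∀ i, X (j i) a = true)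
      then ∏ i, ((j i - prevJ j i : ℕ) : ℝ≥0∞) ^ (-α) else 0)) ^ β ∂μ
      ≤ (ENNReal.ofReal p * zetaE (α * β)) ^ N := by
  obtain ⟨hp0, hp1⟩ := hp
  obtain ⟨hβl, hβ1⟩ := hβ
  have hα0 : 0 < α := lt_trans one_pos hα
  have hβ0 : 0 < β := lt_trans (by positivity) hβl
  set q : ℝ := α * β with hq
  set G : (Fin N → ℕ) → Ω → ℝ≥0∞ := fun j a =>
    if (∀ i, prevJ j i < j i) ∧ (∀ i, X (j i) a = true)
    then ∏ i, ((j i - prevJ j i : ℕ) : ℝ≥0∞) ^ (-q) else 0 with hG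
  set c : (Fin N → ℕ) → ℝ≥0∞ := fun j =>
    if ∀ i, prevJ j i < j i then ∏ i, ((j i - prevJ j i : ℕ) : ℝ≥0∞) ^ (-q) else 0 with hc
  -- pointwise bound
  have hpt : ∀ a : Ω, ((∑' j : Fin N → ℕ,
      if (∀ i, prevJ j i < j i) ∧ (∀ i, X (j i) a = true)
      then ∏ i, ((j i - prevJ j i : ℕ) : ℝ≥0∞) ^ (-α) else 0)) ^ β ≤ ∑' j, G j a := by
    intro a
    refine (tsum_rpow_le _ hβ0 hβ1).trans (le_of_eq ?_)
    congr 1; funext j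
    by_cases hcj : (∀ i, prevJ j i < j i) ∧ (∀ i, X (j i) a = true)
    · rw [if_pos hcj, hG]
      simp only [if_pos hcj]
      rw [← ENNReal.prod_rpow_of_nonneg hβ0.le]
      congr 1; funext i
      rw [← ENNReal.rpow_mul]
      congr 1; ring
    · rw [if_neg hcj, hG]
      simp only [if_neg hcj]
      exact ENNReal.zero_rpow_of_pos hβ0
  -- measurability
  have hmeasG : ∀ j : Fin N → ℕ, Measurable (G j) := by
    intro j
    by_cases hcj : ∀ i, prevJ j i < j i
    · have hGeq : G j = (⋂ i, X (j i) ⁻¹' {true}).indicator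
          (fun _ => ∏ i, ((j i - prevJ j i : ℕ) : ℝ≥0∞) ^ (-q)) := by
        funext a
        by_cases ha : ∀ i, X (j i) a = true
        · have hpos : (∀ i, prevJ j i < j i) ∧ (∀ i, X (j i) a = true) := ⟨hcj, ha⟩
          rw [hG]
          simp only [if_pos hpos]
          rw [Set.indicator_of_mem (by simpa [Set.mem_iInter] using ha)]
        · have hneg : ¬((∀ i, prevJ j i < j i) ∧ (∀ i, X (j i) a = true)) := fun h => ha h.2
          rw [hG]
          simp only [if_neg hneg]
          rw [Set.indicator_of_notMem (by simpa [Set.mem_iInter] using ha)]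
      rw [hGeq]
      exact Measurable.indicator measurable_const
        (MeasurableSet.iInter fun i => (hmeas (j i)) (measurableSet_singleton true))
    · have hGeq : G j = fun _ => 0 := funext fun a => if_neg (fun h => hcj h.1)
      rw [hGeq]; exact measurable_const
  -- integral of each term
  have hint : ∀ j : Fin N → ℕ, ∫⁻ a, G j a ∂μ = c j * ENNReal.ofReal p ^ N := by
    intro j
    by_cases hcj : ∀ i, prevJ j i < j i
    · have hμ : μ (⋂ i, X (j i) ⁻¹' {true}) = ENNReal.ofReal p ^ N := by
        classical
        have hs : ∀ l : ℕ, l ∈ Finset.image j Finset.univ →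
            MeasurableSet[(inferInstance : MeasurableSpace Bool).comap (X l)]
              (X l ⁻¹' {true}) :=
          fun l _ => ⟨{true}, measurableSet_singleton true, rfl⟩
        have h := hindep.meas_biInter (S := Finset.image j Finset.univ)
          (s := fun l => X l ⁻¹' {true}) hs
        have hset : (⋂ l ∈ Finset.image j Finset.univ, X l ⁻¹' {true})
            = ⋂ i, X (j i) ⁻¹' {true} := by
          ext a
          simp only [Set.mem_iInter, Finset.mem_image, Finset.mem_univ, true_and,
            Set.mem_preimage]
          constructor
          · intro h i; exact h (j i) ⟨i, rfl⟩
          · rintro h l ⟨i, rfl⟩; exact h i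
        have hprod : ∏ l ∈ Finset.image j Finset.univ, μ (X l ⁻¹' {true})
            = ENNReal.ofReal p ^ N := by
          have h1 : ∏ l ∈ Finset.image j Finset.univ, μ (X l ⁻¹' {true})
              = ∏ l ∈ Finset.image j Finset.univ, ENNReal.ofReal p :=
            Finset.prod_congr rfl fun l _ => hX l
          rw [h1, Finset.prod_const,
            Finset.card_image_of_injective _ (chain_inj hcj), Finset.card_univ,
            Fintype.card_fin]
        rw [← hset, h, hprod]
      have hGeq : G j = (⋂ i, X (j i) ⁻¹' {true}).indicator
          (fun _ => ∏ i, ((j i - prevJ j i : ℕ) : ℝ≥0∞) ^ (-q)) := by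
        funext a
        by_cases ha : ∀ i, X (j i) a = true
        · have hpos : (∀ i, prevJ j i < j i) ∧ (∀ i, X (j i) a = true) := ⟨hcj, ha⟩
          rw [hG]
          simp only [if_pos hpos]
          rw [Set.indicator_of_mem (by simpa [Set.mem_iInter] using ha)]
        · have hneg : ¬((∀ i, prevJ j i < j i) ∧ (∀ i, X (j i) a = true)) := fun h => ha h.2
          rw [hG]
          simp only [if_neg hneg]
          rw [Set.indicator_of_notMem (by simpa [Set.mem_iInter] using ha)]
      rw [hGeq, lintegral_indicator_const
        (MeasurableSet.iInter fun i => (hmeas (j i)) (measurableSet_singleton true)), hμ,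
        hc]
      simp only [if_pos hcj]
    · have hGeq : G j = fun _ => 0 := funext fun a => if_neg (fun h => hcj h.1)
      rw [hGeq, hc]
      simp [if_neg hcj]
  calc ∫⁻ a, ((∑' j : Fin N → ℕ,
      if (∀ i, prevJ j i < j i) ∧ (∀ i, X (j i) a = true)
      then ∏ i, ((j i - prevJ j i : ℕ) : ℝ≥0∞) ^ (-α) else 0)) ^ β ∂μ
      ≤ ∫⁻ a, ∑' j, G j a ∂μ := lintegral_mono hpt
    _ = ∑' j, ∫⁻ a, G j a ∂μ := lintegral_tsum fun j => (hmeasG j).aemeasurable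
    _ = ∑' j, c j * ENNReal.ofReal p ^ N := by congr 1; funext j; exact hint j
    _ = (∑' j, c j) * ENNReal.ofReal p ^ N := ENNReal.tsum_mul_right
    _ = zetaE q ^ N * ENNReal.ofReal p ^ N := by rw [hc, sum_chains q N]
    _ = (ENNReal.ofReal p * zetaE q) ^ N := by rw [← mul_pow, mul_comm]

/-- **Fractional moment bound** for the renewal sum along an i.i.d. Bernoulli(p)
sequence: for `β ∈ (1/α, 1]`, `E[S_N(ω)^β] ≤ (p ζ(αβ))^N`. -/
theorem fractional_moment_bound
    {Ω : Type*} [MeasurableSpace Ω] (μ : Measure Ω) [IsProbabilityMeasure μ]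
    (X : ℕ → Ω → Bool)
    (hmeas : ∀ l, Measurable (X l))
    (hindep : iIndepFun X μ)
    (p : ℝ) (hp : p ∈ Set.Ioo (0 : ℝ) 1)
    (hX : ∀ l, μ {a | X l a = true} = ENNReal.ofReal p)
    (α : ℝ) (hα : 1 < α)
    (β : ℝ) (hβ : β ∈ Set.Ioc (1 / α) 1)
    (N : ℕ) :
    ∫⁻ a, (SN α N (fun l => X l a)) ^ β ∂μ
      ≤ (ENNReal.ofReal p * zetaE (α * β)) ^ N := by
  exact fractional_moment_bound_aux μ X hmeas hindep p hp hX α hα β hβ N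

end
end

section
/- Let (ω_l)_{l∈ℕ} be i.i.d. Bernoulli(p), p ∈ (0,1). Let τ_N be the first index l such that ω_l = ω_{l+1} = ... = ω_{l+N-1} = 1 (the start of the first run of N consecutive ones). Then almost surely lim_{N→∞} (1/N) log τ_N = log(1/p). -/
open MeasureTheory ProbabilityTheory Filter
open scoped ENNReal Classical

noncomputable section

/-- `τ_N(ω)`: the first index `l ≥ 1` at which a run of `N` consecutive ones starts. -/
def firstRun (N : ℕ) (ω : ℕ → Bool) : ℕ :=
  sInf {l : ℕ | 1 ≤ l ∧ ∀ k < N, ω (l + k) = true}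

namespace FirstRunAux

set_option linter.unusedSectionVars false
set_option linter.unusedVariables false

variable {Ω : Type*} [MeasurableSpace Ω] {μ : Measure Ω} [IsProbabilityMeasure μ]
  {X : ℕ → Ω → Bool} {p : ℝ}

def runSet (X : ℕ → Ω → Bool) (N l : ℕ) : Set Ω := {a | ∀ k < N, X (l + k) a = true}

lemma runSet_eq (X : ℕ → Ω → Bool) (N l : ℕ) :
    runSet X N l = ⋂ i ∈ (Finset.range N).image (l + ·), X i ⁻¹' {true} := by
  ext a
  simp only [runSet, Set.mem_setOf_eq, Set.mem_iInter, Finset.mem_image, Finset.mem_range,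
    Set.mem_preimage, Set.mem_singleton_iff]
  constructor
  · rintro h i ⟨k, hk, rfl⟩; exact h k hk
  · intro h k hk; exact h (l + k) ⟨k, hk, rfl⟩

lemma measurableSet_runSet (hmeas : ∀ l, Measurable (X l)) (N l : ℕ) :
    MeasurableSet (runSet X N l) := by
  rw [runSet_eq]
  exact Finset.measurableSet_biInter _ fun i _ => (hmeas i) (measurableSet_singleton true)

lemma meas_runSet (hindep : iIndepFun X μ)
    (hX : ∀ l, μ {a | X l a = true} = ENNReal.ofReal p) (N l : ℕ) :
    μ (runSet X N l) = ENNReal.ofReal p ^ N := by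
  rw [runSet_eq, hindep.meas_biInter (fun i _ => ⟨{true}, measurableSet_singleton true, rfl⟩)]
  have : ∀ i, μ (X i ⁻¹' {true}) = ENNReal.ofReal p := fun i => hX i
  rw [Finset.prod_congr rfl (fun i _ => this i), Finset.prod_const,
    Finset.card_image_of_injective _ (add_right_injective l), Finset.card_range]

lemma measurableSet_pi_bool {ι : Type*} [Finite ι] (B : Set (ι → Bool)) : MeasurableSet B := by
  have hsing : ∀ v : ι → Bool, MeasurableSet ({v} : Set (ι → Bool)) := by
    intro v
    have : ({v} : Set (ι → Bool)) = ⋂ i, (fun w => w i) ⁻¹' {v i} := by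
      ext w; simp [funext_iff]
    rw [this]
    exact MeasurableSet.iInter fun i => measurable_pi_apply i (measurableSet_singleton _)
  have : B = ⋃ v ∈ B, {v} := by simp
  rw [this]
  exact MeasurableSet.biUnion (Set.to_countable B) fun v _ => hsing v


lemma meas_blocks (hmeas : ∀ l, Measurable (X l))
    (hindep : iIndepFun X μ)
    (hX : ∀ l, μ {a | X l a = true} = ENNReal.ofReal p) (N : ℕ) :
    ∀ m : ℕ, μ (⋂ j ∈ Finset.range m, (runSet X N (1 + j * N))ᶜ)
      = (1 - ENNReal.ofReal p ^ N) ^ m := by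
  intro m
  induction m with
  | zero => simp
  | succ m ih =>
    have key : ∀ j k : ℕ, j < m → k < N → 1 + j * N + k < 1 + m * N := by
      intro j k hj hk
      have h1 : j * N + N ≤ m * N := by
        calc j * N + N = (j + 1) * N := by ring
        _ ≤ m * N := Nat.mul_le_mul_right _ hj
      omega
    set T : Finset ℕ := Finset.range (1 + m * N) with hT
    set S : Finset ℕ := (Finset.range N).image (fun k => 1 + m * N + k) with hS
    have hST : Disjoint T S := by
      rw [Finset.disjoint_left]
      intro i hiT hiS
      simp only [hT, Finset.mem_range] at hiT
      simp only [hS, Finset.mem_image, Finset.mem_range] at hiS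
      obtain ⟨k, _, rfl⟩ := hiS
      omega
    have hIF : IndepFun (fun a (i : T) => X i a) (fun a (i : S) => X i a) μ :=
      hindep.indepFun_finset T S hST hmeas
    set BT : Set (T → Bool) :=
      {v | ∀ j < m, ∃ k < N, (if h : 1 + j * N + k ∈ T then v ⟨_, h⟩ else true) = false} with hBT
    set BS : Set (S → Bool) :=
      {v | ∀ k < N, (if h : 1 + m * N + k ∈ S then v ⟨_, h⟩ else true) = true} with hBS
    have hAT : (⋂ j ∈ Finset.range m, (runSet X N (1 + j * N))ᶜ)
        = (fun a (i : T) => X i a) ⁻¹' BT := by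
      ext a
      simp only [Set.mem_iInter, Finset.mem_range, Set.mem_compl_iff, Set.mem_preimage, hBT,
        Set.mem_setOf_eq, runSet]
      constructor
      · intro h j hj
        have h' := h j hj
        push_neg at h'
        obtain ⟨k, hk, hfalse⟩ := h'
        refine ⟨k, hk, ?_⟩
        have hmem : 1 + j * N + k ∈ T := by
          simp only [hT, Finset.mem_range]; exact key j k hj hk
        rw [dif_pos hmem]
        simpa using hfalse
      · intro h j hj
        obtain ⟨k, hk, hfalse⟩ := h j hj
        have hmem : 1 + j * N + k ∈ T := by
          simp only [hT, Finset.mem_range]; exact key j k hj hk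
        rw [dif_pos hmem] at hfalse
        intro hall
        have h2 : X (1 + j * N + k) a = false := hfalse
        rw [hall k hk] at h2
        exact (by simp at h2)
    have hES : runSet X N (1 + m * N) = (fun a (i : S) => X i a) ⁻¹' BS := by
      ext a
      simp only [Set.mem_preimage, hBS, Set.mem_setOf_eq, runSet]
      constructor
      · intro h k hk
        have hmem : 1 + m * N + k ∈ S := by
          simp only [hS, Finset.mem_image, Finset.mem_range]; exact ⟨k, hk, rfl⟩
        rw [dif_pos hmem]
        exact h k hk
      · intro h k hk
        have hmem : 1 + m * N + k ∈ S := by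
          simp only [hS, Finset.mem_image, Finset.mem_range]; exact ⟨k, hk, rfl⟩
        have := h k hk
        rw [dif_pos hmem] at this
        exact this
    have hstep : μ ((⋂ j ∈ Finset.range m, (runSet X N (1 + j * N))ᶜ)
        ∩ (runSet X N (1 + m * N))ᶜ)
        = μ (⋂ j ∈ Finset.range m, (runSet X N (1 + j * N))ᶜ)
          * μ ((runSet X N (1 + m * N))ᶜ) := by
      rw [hAT, hES, ← Set.preimage_compl]
      exact hIF.measure_inter_preimage_eq_mul BT BSᶜ (measurableSet_pi_bool BT)
        (measurableSet_pi_bool BSᶜ)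
    have hcompl : μ ((runSet X N (1 + m * N))ᶜ) = 1 - ENNReal.ofReal p ^ N := by
      rw [prob_compl_eq_one_sub (measurableSet_runSet hmeas N _),
        meas_runSet hindep hX N _]
    rw [Finset.range_add_one]
    rw [Finset.set_biInter_insert, Set.inter_comm, hstep, ih, hcompl, pow_succ]

/-- geometric tail summability -/
lemma tsum_ofReal_pow_ne_top {r : ℝ} (hr0 : 0 ≤ r) (hr1 : r < 1) :
    ∑' N : ℕ, ENNReal.ofReal (r ^ N) ≠ ∞ := by
  have h : ∀ N : ℕ, ENNReal.ofReal (r ^ N) = ENNReal.ofReal r ^ N := fun N =>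
    ENNReal.ofReal_pow hr0 N
  simp_rw [h]
  rw [ENNReal.tsum_geometric]
  rw [Ne, ENNReal.inv_eq_top, tsub_eq_zero_iff_le]
  exact not_le.mpr (ENNReal.ofReal_lt_one.mpr hr1)

lemma bc_low (hmeas : ∀ l, Measurable (X l))
    (hindep : iIndepFun X μ)
    (hp : p ∈ Set.Ioo (0 : ℝ) 1)
    (hX : ∀ l, μ {a | X l a = true} = ENNReal.ofReal p) {ε : ℝ} (hε : 0 < ε) :
    ∀ᵐ a ∂μ, ∀ᶠ N : ℕ in atTop, ∀ l : ℕ, 1 ≤ l →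
      ((l : ℝ) ≤ (1 / p) ^ ((1 - ε) * N)) → ¬ ∀ k < N, X (l + k) a = true := by
  have hp0 : (0 : ℝ) < p := hp.1
  have hq1 : (1 : ℝ) < 1 / p := (one_lt_div hp0).mpr hp.2
  set s : ℕ → Set Ω := fun N =>
    ⋃ l ∈ Finset.Icc 1 ⌊(1 / p : ℝ) ^ ((1 - ε) * N)⌋₊, runSet X N l with hs
  have hbound : ∀ N, μ (s N) ≤ ENNReal.ofReal ((p ^ ε) ^ N) := by
    intro N
    set x : ℝ := (1 / p : ℝ) ^ ((1 - ε) * N) with hx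
    have hx0 : 0 < x := Real.rpow_pos_of_pos (by positivity) _
    calc μ (s N) ≤ ∑ l ∈ Finset.Icc 1 ⌊x⌋₊, μ (runSet X N l) :=
          measure_biUnion_finset_le _ _
      _ = ∑ l ∈ Finset.Icc 1 ⌊x⌋₊, ENNReal.ofReal p ^ N := by
          refine Finset.sum_congr rfl fun l _ => meas_runSet hindep hX N l
      _ = (⌊x⌋₊ : ℝ≥0∞) * ENNReal.ofReal p ^ N := by
          rw [Finset.sum_const, Nat.card_Icc]; simp [nsmul_eq_mul]
      _ ≤ ENNReal.ofReal x * ENNReal.ofReal (p ^ N) := by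
          rw [ENNReal.ofReal_pow hp0.le]
          exact mul_le_mul_left (by
            rw [← ENNReal.ofReal_natCast]
            exact ENNReal.ofReal_le_ofReal (Nat.floor_le hx0.le)) _
      _ = ENNReal.ofReal (x * p ^ N) := (ENNReal.ofReal_mul hx0.le).symm
      _ = ENNReal.ofReal ((p ^ ε) ^ N) := by
          congr 1
          rw [hx, one_div, ← Real.rpow_natCast p N, Real.inv_rpow hp0.le,
            ← Real.rpow_neg hp0.le, ← Real.rpow_add hp0, ← Real.rpow_natCast (p ^ ε) N,
            ← Real.rpow_mul hp0.le]
          ring_nf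
  have hsum : ∑' N, μ (s N) ≠ ∞ := by
    refine ne_top_of_le_ne_top (tsum_ofReal_pow_ne_top (by positivity)
      (Real.rpow_lt_one hp0.le hp.2 hε)) (ENNReal.tsum_le_tsum hbound)
  filter_upwards [ae_eventually_notMem hsum] with a ha
  filter_upwards [ha] with N hN l hl1 hlx hrun
  refine hN ?_
  rw [hs]
  simp only [Set.mem_iUnion]
  refine ⟨l, ?_, hrun⟩
  simp only [Finset.mem_Icc]
  exact ⟨hl1, Nat.le_floor hlx⟩


lemma bc_up (hmeas : ∀ l, Measurable (X l))
    (hindep : iIndepFun X μ)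
    (hp : p ∈ Set.Ioo (0 : ℝ) 1)
    (hX : ∀ l, μ {a | X l a = true} = ENNReal.ofReal p) {ε : ℝ} (hε : 0 < ε) :
    ∀ᵐ a ∂μ, ∀ᶠ N : ℕ in atTop, ∃ l : ℕ, 1 ≤ l ∧
      ((l : ℝ) ≤ 2 * N * (1 / p) ^ ((1 + ε) * N)) ∧ ∀ k < N, X (l + k) a = true := by
  have hp0 : (0 : ℝ) < p := hp.1
  have hq1 : (1 : ℝ) < 1 / p := (one_lt_div hp0).mpr hp.2
  set mm : ℕ → ℕ := fun N => ⌈(1 / p : ℝ) ^ ((1 + ε) * N)⌉₊ with hmm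
  set t : ℕ → Set Ω := fun N =>
    ⋂ j ∈ Finset.range (mm N), (runSet X N (1 + j * N))ᶜ with ht
  have hx1 : ∀ N : ℕ, (1 : ℝ) ≤ (1 / p : ℝ) ^ ((1 + ε) * N) := fun N =>
    Real.one_le_rpow hq1.le (by positivity)
  have hbound : ∀ N, μ (t N) ≤ ENNReal.ofReal ((p ^ ε) ^ N) := by
    intro N
    set x : ℝ := (1 / p : ℝ) ^ ((1 + ε) * N) with hx
    have hpN1 : p ^ N ≤ 1 := pow_le_one₀ hp0.le hp.2.le
    have hpN0 : (0 : ℝ) < p ^ N := by positivity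
    have h1 : μ (t N) = ENNReal.ofReal ((1 - p ^ N) ^ mm N) := by
      rw [ht, meas_blocks hmeas hindep hX N (mm N), ← ENNReal.ofReal_pow hp0.le,
        ← ENNReal.ofReal_one, ← ENNReal.ofReal_sub _ (by positivity),
        ENNReal.ofReal_pow (by linarith)]
    rw [h1]
    refine ENNReal.ofReal_le_ofReal ?_
    -- (1-p^N)^m ≤ exp(-(p^N))^m = exp(-(p^N * m)) ≤ exp(-(x * p^N)) ≤ (x*p^N)⁻¹ = (p^ε)^N
    have hy : x * p ^ N = (1 / p : ℝ) ^ (ε * N) := by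
      rw [hx, one_div, ← Real.rpow_natCast p N, Real.inv_rpow hp0.le,
        ← Real.rpow_neg hp0.le, ← Real.rpow_add hp0, Real.inv_rpow hp0.le,
        ← Real.rpow_neg hp0.le]
      ring_nf
    have hy0 : (0 : ℝ) < x * p ^ N := by
      have := hx1 N; nlinarith
    calc (1 - p ^ N) ^ mm N ≤ Real.exp (-(p ^ N)) ^ mm N := by
          refine pow_le_pow_left₀ (by linarith) ?_ _
          have := Real.add_one_le_exp (-(p ^ N)); linarith
      _ = Real.exp (-(p ^ N * mm N)) := by
          rw [← Real.exp_nat_mul]; ring_nf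
      _ ≤ Real.exp (-(x * p ^ N)) := by
          refine Real.exp_le_exp.mpr ?_
          have hmx : x ≤ (mm N : ℝ) := Nat.le_ceil x
          nlinarith
      _ ≤ (x * p ^ N)⁻¹ := by
          rw [Real.exp_neg]
          refine inv_anti₀ hy0 ?_
          have := Real.add_one_le_exp (x * p ^ N); linarith
      _ = (p ^ ε) ^ N := by
          rw [hy, one_div, Real.inv_rpow hp0.le, inv_inv, ← Real.rpow_natCast (p ^ ε) N,
            ← Real.rpow_mul hp0.le]
  have hsum : ∑' N, μ (t N) ≠ ∞ :=
    ne_top_of_le_ne_top (tsum_ofReal_pow_ne_top (by positivity)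
      (Real.rpow_lt_one hp0.le hp.2 hε)) (ENNReal.tsum_le_tsum hbound)
  filter_upwards [ae_eventually_notMem hsum] with a ha
  filter_upwards [ha, eventually_ge_atTop 1] with N hN hN1
  rw [ht] at hN
  simp only [Set.mem_iInter, Set.mem_compl_iff, Finset.mem_range, not_forall] at hN
  obtain ⟨j, hj, hrun⟩ := hN
  rw [not_not] at hrun
  refine ⟨1 + j * N, by omega, ?_, hrun⟩
  -- 1 + j*N ≤ mm N * N ≤ (x+1) * N ≤ 2 * N * x
  set x : ℝ := (1 / p : ℝ) ^ ((1 + ε) * N) with hx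
  have hnat : 1 + j * N ≤ mm N * N := by
    have hj' : j + 1 ≤ mm N := hj
    calc 1 + j * N ≤ N + j * N := by omega
      _ = (j + 1) * N := by ring
      _ ≤ mm N * N := Nat.mul_le_mul_right _ hj'
  have hceil : (mm N : ℝ) ≤ x + 1 := (Nat.ceil_lt_add_one (by positivity)).le
  have hx1' : (1 : ℝ) ≤ x := hx1 N
  have hN1' : (1 : ℝ) ≤ (N : ℝ) := by exact_mod_cast hN1
  calc ((1 + j * N : ℕ) : ℝ) ≤ ((mm N * N : ℕ) : ℝ) := by exact_mod_cast hnat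
    _ = (mm N : ℝ) * N := by push_cast; ring
    _ ≤ (x + 1) * N := by nlinarith
    _ ≤ 2 * N * x := by nlinarith

end FirstRunAux

/-- **LLN for the first run of `N` consecutive successes**: almost surely,
`(1/N) log τ_N → log(1/p)`. -/
theorem firstRun_log_tendsto
    {Ω : Type*} [MeasurableSpace Ω] (μ : Measure Ω) [IsProbabilityMeasure μ]
    (X : ℕ → Ω → Bool)
    (hmeas : ∀ l, Measurable (X l))
    (hindep : iIndepFun X μ)
    (p : ℝ) (hp : p ∈ Set.Ioo (0 : ℝ) 1)
    (hX : ∀ l, μ {a | X l a = true} = ENNReal.ofReal p) :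
    ∀ᵐ a ∂μ,
      Filter.Tendsto
        (fun N : ℕ => Real.log (firstRun N (fun l => X l a)) / N)
        atTop (nhds (Real.log (1 / p))) := by
  have hp0 : (0 : ℝ) < p := hp.1
  have hq1 : (1 : ℝ) < 1 / p := (one_lt_div hp0).mpr hp.2
  have hq0 : (0 : ℝ) < 1 / p := by positivity
  set L : ℝ := Real.log (1 / p) with hLdef
  have hL0 : 0 < L := Real.log_pos hq1
  have hεk : ∀ k : ℕ, (0 : ℝ) < 1 / ((k : ℝ) + 1) := fun k => by positivity
  have hlow : ∀ᵐ a ∂μ, ∀ k : ℕ, ∀ᶠ N : ℕ in atTop, ∀ l : ℕ, 1 ≤ l →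
      ((l : ℝ) ≤ (1 / p) ^ ((1 - 1 / ((k : ℝ) + 1)) * N)) → ¬ ∀ j < N, X (l + j) a = true :=
    ae_all_iff.2 fun k => FirstRunAux.bc_low hmeas hindep hp hX (hεk k)
  have hup : ∀ᵐ a ∂μ, ∀ k : ℕ, ∀ᶠ N : ℕ in atTop, ∃ l : ℕ, 1 ≤ l ∧
      ((l : ℝ) ≤ 2 * N * (1 / p) ^ ((1 + 1 / ((k : ℝ) + 1)) * N)) ∧ ∀ j < N, X (l + j) a = true :=
    ae_all_iff.2 fun k => FirstRunAux.bc_up hmeas hindep hp hX (hεk k)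
  have hlog : Tendsto (fun N : ℕ => (Real.log 2 + Real.log N) / N) atTop (nhds 0) := by
    have h1 : Tendsto (fun N : ℕ => Real.log 2 / N) atTop (nhds 0) :=
      tendsto_const_div_atTop_nhds_zero_nat _
    have h2 : Tendsto (fun N : ℕ => Real.log N / N) atTop (nhds 0) :=
      Real.isLittleO_log_id_atTop.tendsto_div_nhds_zero.comp tendsto_natCast_atTop_atTop
    have h3 := h1.add h2
    rw [add_zero] at h3
    refine h3.congr fun N => ?_
    rw [← add_div]
  filter_upwards [hlow, hup] with a halow haup
  rw [tendsto_order]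
  constructor
  · -- lower bound
    intro c hc
    obtain ⟨k, hk⟩ := exists_nat_one_div_lt (show (0 : ℝ) < (L - c) / L by
      apply div_pos <;> linarith)
    set ε : ℝ := 1 / ((k : ℝ) + 1) with hεdef
    have hε0 : 0 < ε := hεk k
    have hck : c < (1 - ε) * L := by
      have h2 : ε * L < ((L - c) / L) * L := mul_lt_mul_of_pos_right hk hL0
      have h3 : ((L - c) / L) * L = L - c := by field_simp
      nlinarith
    filter_upwards [halow k, haup k, eventually_ge_atTop 1] with N hlowN hupN hN1
    obtain ⟨l, hl1, hlb, hlrun⟩ := hupN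
    have hne : {l : ℕ | 1 ≤ l ∧ ∀ j < N, (fun i => X i a) (l + j) = true}.Nonempty :=
      ⟨l, hl1, hlrun⟩
    have hτmem := Nat.sInf_mem hne
    set τ : ℕ := firstRun N (fun i => X i a) with hτdef
    have hτmem' : 1 ≤ τ ∧ ∀ j < N, X (τ + j) a = true := hτmem
    have hgt : (1 / p : ℝ) ^ ((1 - ε) * N) < τ := by
      by_contra hle
      push_neg at hle
      exact hlowN τ hτmem'.1 hle hτmem'.2
    have hN0 : (0 : ℝ) < (N : ℝ) := by exact_mod_cast hN1
    rw [lt_div_iff₀ hN0]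
    calc c * N < ((1 - ε) * L) * N := mul_lt_mul_of_pos_right hck hN0
      _ = ((1 - ε) * N) * L := by ring
      _ = Real.log ((1 / p : ℝ) ^ ((1 - ε) * N)) := (Real.log_rpow hq0 _).symm
      _ ≤ Real.log τ := Real.log_le_log (Real.rpow_pos_of_pos hq0 _) hgt.le
  · -- upper bound
    intro c hc
    obtain ⟨k, hk⟩ := exists_nat_one_div_lt (show (0 : ℝ) < (c - L) / (2 * L) by
      apply div_pos <;> linarith)
    set ε : ℝ := 1 / ((k : ℝ) + 1) with hεdef
    have hε0 : 0 < ε := hεk k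
    have hck : (1 + ε) * L < (c + L) / 2 := by
      have h2 : ε * L < ((c - L) / (2 * L)) * L := mul_lt_mul_of_pos_right hk hL0
      have h3 : ((c - L) / (2 * L)) * L = (c - L) / 2 := by field_simp
      nlinarith
    have hev2 : ∀ᶠ N : ℕ in atTop, (Real.log 2 + Real.log N) / N < c - (c + L) / 2 :=
      (tendsto_order.1 hlog).2 _ (by linarith)
    filter_upwards [haup k, hev2, eventually_ge_atTop 1] with N hupN hsmall hN1
    obtain ⟨l, hl1, hlb, hlrun⟩ := hupN
    have hne : {l : ℕ | 1 ≤ l ∧ ∀ j < N, (fun i => X i a) (l + j) = true}.Nonempty :=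
      ⟨l, hl1, hlrun⟩
    set τ : ℕ := firstRun N (fun i => X i a) with hτdef
    have hτle : τ ≤ l := Nat.sInf_le ⟨hl1, hlrun⟩
    have hτ1 : 1 ≤ τ := (Nat.sInf_mem hne).1
    have hN0 : (0 : ℝ) < (N : ℝ) := by exact_mod_cast hN1
    set x : ℝ := (1 / p : ℝ) ^ ((1 + ε) * N) with hxdef
    have hx1 : (1 : ℝ) ≤ x := Real.one_le_rpow hq1.le (by positivity)
    have hτpos : (0 : ℝ) < (τ : ℝ) := by exact_mod_cast hτ1
    have hlpos : (0 : ℝ) < (l : ℝ) := by exact_mod_cast hl1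
    have hlogle : Real.log τ ≤ Real.log 2 + Real.log N + ((1 + ε) * N) * L := by
      calc Real.log τ ≤ Real.log l := Real.log_le_log hτpos (by exact_mod_cast hτle)
        _ ≤ Real.log (2 * N * x) := Real.log_le_log hlpos hlb
        _ = Real.log 2 + Real.log N + Real.log x := by
            rw [Real.log_mul (by positivity) (by positivity),
              Real.log_mul (by norm_num) (by positivity)]
        _ = Real.log 2 + Real.log N + ((1 + ε) * N) * L := by
            rw [hxdef, Real.log_rpow hq0]
    rw [div_lt_iff₀ hN0]
    have hsmall' : Real.log 2 + Real.log N < (c - (c + L) / 2) * N := by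
      rw [div_lt_iff₀ hN0] at hsmall
      exact hsmall
    calc Real.log τ ≤ Real.log 2 + Real.log N + ((1 + ε) * N) * L := hlogle
      _ < (c - (c + L) / 2) * N + ((c + L) / 2) * N := by
          have h4 : ((1 + ε) * N) * L = ((1 + ε) * L) * N := by ring
          rw [h4]
          exact add_lt_add hsmall' (mul_lt_mul_of_pos_right hck hN0)
      _ = c * N := by ring

end
end

section
/- Monotone convergence of coarse-grained relative entropy (Deuschel–Stroock): let G be a Polish space and (A_c)_{c∈ℕ} a sequence of nested finite measurable partitions of G such that the diameter of the partition element containing any fixed x tends to 0 as c → ∞. Then for any probability measures μ, ν on G, the relative entropies of the coarse-grainings satisfy h(⟨μ⟩_c | ⟨ν⟩_c) ↗ h(μ | ν) as c → ∞. -/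
open MeasureTheory Filter
open scoped ENNReal Classical
open scoped Topology

noncomputable section

/-- Relative entropy (Kullback–Leibler divergence) of two measures on a finite
(discrete) space, with value `+∞` when absolute continuity fails. -/
def klFin {F : Type*} [Fintype F] [MeasurableSpace F] (μ ν : Measure F) : ℝ≥0∞ :=
  if ∀ x : F, ν {x} = 0 → μ {x} = 0 then
    ENNReal.ofReal
      (∑ x : F, (μ {x}).toReal * Real.log ((μ {x}).toReal / (ν {x}).toReal))
  else ∞

/-- Relative entropy of two measures on a general measurable space, defined as the
supremum of the relative entropies of their images under maps to finite spaces
(the finite-partition variational characterisation). -/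
def relEntropy {G : Type*} [MeasurableSpace G] (μ ν : Measure G) : ℝ≥0∞ :=
  ⨆ (n : ℕ) (f : G → Fin n) (_ : Measurable f), klFin (μ.map f) (ν.map f)

private lemma measure_coe_finset_eq_sum {E : Type*} [MeasurableSpace E] [MeasurableSingletonClass E]
    (μ : Measure E) (s : Finset E) : μ ↑s = ∑ x ∈ s, μ {x} := by
  have h : (↑s : Set E) = ⋃ x ∈ s, ({x} : Set E) := by ext y; simp
  rw [h, measure_biUnion_finset ?_ fun x _ => measurableSet_singleton x]
  intro x _ y _ hxy
  exact Set.disjoint_singleton.mpr hxy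

private lemma logSum_le {E : Type*} (s : Finset E) (a b : E → ℝ)
    (ha : ∀ x ∈ s, 0 ≤ a x) (hb : ∀ x ∈ s, 0 ≤ b x)
    (hab : ∀ x ∈ s, b x = 0 → a x = 0) :
    (∑ x ∈ s, a x) * Real.log ((∑ x ∈ s, a x) / (∑ x ∈ s, b x)) ≤
      ∑ x ∈ s, a x * Real.log (a x / b x) := by
  classical
  set s' := s.filter (fun x => b x ≠ 0) with hs'
  have hsub : s' ⊆ s := by rw [hs']; exact Finset.filter_subset _ _
  have hbs' : ∀ x ∈ s', 0 < b x := by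
    intro x hx
    have hx' := hx
    rw [hs'] at hx'
    rcases Finset.mem_filter.1 hx' with ⟨hxs, hbx⟩
    exact lt_of_le_of_ne (hb x hxs) (Ne.symm hbx)
  have hsa : ∑ x ∈ s', a x = ∑ x ∈ s, a x :=
    Finset.sum_filter_of_ne (fun x hx hax => fun hbx => hax (hab x hx hbx))
  have hsb : ∑ x ∈ s', b x = ∑ x ∈ s, b x :=
    Finset.sum_filter_of_ne (fun x _ hbx => hbx)
  have hst : ∑ x ∈ s', a x * Real.log (a x / b x) = ∑ x ∈ s, a x * Real.log (a x / b x) := by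
    apply Finset.sum_filter_of_ne
    intro x hx hne hbx
    exact hne (by rw [hab x hx hbx]; ring)
  rw [← hsa, ← hsb, ← hst]
  set A := ∑ x ∈ s', a x with hA
  set B := ∑ x ∈ s', b x with hB
  rcases eq_or_lt_of_le (Finset.sum_nonneg fun x hx => hb x (hsub hx)) with hB0 | hBpos
  · -- B = 0 : s' has no elements with positive b, so s' = ∅
    have hs'e : s' = ∅ := by
      by_contra hne
      rcases Finset.nonempty_iff_ne_empty.2 hne with ⟨x, hx⟩
      have := Finset.sum_pos' (fun y hy => (hbs' y hy).le) ⟨x, hx, hbs' x hx⟩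
      rw [← hB] at this
      exact absurd hB0.symm (ne_of_gt this)
    simp [hA, hB, hs'e]
  · have hBne : B ≠ 0 := ne_of_gt hBpos
    have hjensen := Real.convexOn_mul_log.map_sum_le (t := s') (w := fun x => b x / B)
      (p := fun x => a x / b x)
      (fun x hx => div_nonneg (hb x (hsub hx)) hBpos.le)
      (by rw [← Finset.sum_div, ← hB, div_self hBne])
      (fun x hx => Set.mem_Ici.2 (div_nonneg (ha x (hsub hx)) (hbs' x hx).le))
    simp only [smul_eq_mul] at hjensen
    have hcenter : ∑ x ∈ s', b x / B * (a x / b x) = A / B := by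
      rw [hA, Finset.sum_div]
      refine Finset.sum_congr rfl fun x hx => ?_
      have hbx := (hbs' x hx).ne'
      field_simp
    rw [hcenter] at hjensen
    have hrhs : ∑ x ∈ s', b x / B * (a x / b x * Real.log (a x / b x)) =
        (∑ x ∈ s', a x * Real.log (a x / b x)) / B := by
      rw [Finset.sum_div]
      refine Finset.sum_congr rfl fun x hx => ?_
      have hbx := (hbs' x hx).ne'
      field_simp
    rw [hrhs] at hjensen
    -- hjensen : (A / B) * log (A / B) ≤ (∑ ...) / B
    have := mul_le_mul_of_nonneg_left hjensen hBpos.le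
    calc A * Real.log (A / B) = B * (A / B * Real.log (A / B)) := by field_simp
    _ ≤ B * ((∑ x ∈ s', a x * Real.log (a x / b x)) / B) := this
    _ = ∑ x ∈ s', a x * Real.log (a x / b x) := by field_simp



private lemma klFin_map_le {E E' : Type*} [Fintype E] [MeasurableSpace E]
    [MeasurableSingletonClass E] [Fintype E'] [MeasurableSpace E']
    [MeasurableSingletonClass E'] (g : E → E') (μ ν : Measure E)
    [IsFiniteMeasure μ] [IsFiniteMeasure ν] :
    klFin (μ.map g) (ν.map g) ≤ klFin μ ν := by
  classical
  have hg : Measurable g := measurable_of_finite g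
  have hmap : ∀ (ρ : Measure E) (y : E'),
      ρ.map g {y} = ∑ x ∈ Finset.univ.filter (fun x => g x = y), ρ {x} := by
    intro ρ y
    rw [Measure.map_apply hg (measurableSet_singleton y),
      ← measure_coe_finset_eq_sum]
    congr 1
    ext z
    simp
  by_cases hac : ∀ x : E, ν {x} = 0 → μ {x} = 0
  · have hac' : ∀ y : E', ν.map g {y} = 0 → μ.map g {y} = 0 := by
      intro y hy
      rw [hmap] at hy ⊢
      refine Finset.sum_eq_zero fun x hx => ?_
      exact hac x ((Finset.sum_eq_zero_iff.1 hy) x hx)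
    rw [klFin, klFin, if_pos hac, if_pos hac']
    apply ENNReal.ofReal_le_ofReal
    have htoReal : ∀ (ρ : Measure E) [IsFiniteMeasure ρ] (y : E'),
        ((ρ.map g) {y}).toReal = ∑ x ∈ Finset.univ.filter (fun x => g x = y), (ρ {x}).toReal := by
      intro ρ _ y
      rw [hmap, ENNReal.toReal_sum (fun x _ => measure_ne_top ρ _)]
    calc ∑ y : E', ((μ.map g) {y}).toReal *
          Real.log (((μ.map g) {y}).toReal / ((ν.map g) {y}).toReal)
        ≤ ∑ y : E', ∑ x ∈ Finset.univ.filter (fun x => g x = y),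
            (μ {x}).toReal * Real.log ((μ {x}).toReal / (ν {x}).toReal) := by
          refine Finset.sum_le_sum fun y _ => ?_
          rw [htoReal μ y, htoReal ν y]
          refine logSum_le _ _ _ (fun x _ => ENNReal.toReal_nonneg)
            (fun x _ => ENNReal.toReal_nonneg) (fun x _ hbx => ?_)
          have hν : ν {x} = 0 := by
            have := measure_ne_top ν ({x} : Set E)
            rwa [ENNReal.toReal_eq_zero_iff, or_iff_left this] at hbx
          rw [hac x hν, ENNReal.toReal_zero]
      _ = ∑ x : E, (μ {x}).toReal * Real.log ((μ {x}).toReal / (ν {x}).toReal) := by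
          exact Finset.sum_fiberwise_of_maps_to (fun x _ => Finset.mem_univ (g x)) _
  · have h : klFin μ ν = ∞ := by rw [klFin, if_neg hac]
    rw [h]; exact le_top

private lemma ofReal_smoothed_le_klFin {E : Type*} [Fintype E] [MeasurableSpace E]
    (μ ν : Measure E) [IsFiniteMeasure μ] [IsFiniteMeasure ν] {η : ℝ} (hη : 0 < η) :
    ENNReal.ofReal (∑ x : E, ((μ {x}).toReal * Real.log (μ {x}).toReal
      - (μ {x}).toReal * Real.log ((ν {x}).toReal + η))) ≤ klFin μ ν := by
  by_cases hac : ∀ x : E, ν {x} = 0 → μ {x} = 0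
  · rw [klFin, if_pos hac]
    apply ENNReal.ofReal_le_ofReal
    refine Finset.sum_le_sum fun x _ => ?_
    rcases eq_or_lt_of_le (ENNReal.toReal_nonneg : 0 ≤ (μ {x}).toReal) with ha0 | hapos
    · rw [← ha0]; simp
    · have hbν : ν {x} ≠ 0 := by
        intro h0
        rw [hac x h0] at hapos
        simp at hapos
      have hbpos : 0 < (ν {x}).toReal := ENNReal.toReal_pos hbν (measure_ne_top ν _)
      rw [Real.log_div (ne_of_gt hapos) (ne_of_gt hbpos), mul_sub]
      have hlog : Real.log (ν {x}).toReal ≤ Real.log ((ν {x}).toReal + η) :=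
        Real.log_le_log hbpos (by linarith)
      nlinarith
  · have h : klFin μ ν = ∞ := by rw [klFin, if_neg hac]
    rw [h]; exact le_top

private lemma klFin_le_of_smoothed_le {E : Type*} [Fintype E] [MeasurableSpace E]
    (μ ν : Measure E) [IsProbabilityMeasure μ] [IsProbabilityMeasure ν] {L : ℝ≥0∞}
    (h : ∀ η : ℝ, 0 < η → η ≤ 1 →
      ENNReal.ofReal (∑ x : E, ((μ {x}).toReal * Real.log (μ {x}).toReal
        - (μ {x}).toReal * Real.log ((ν {x}).toReal + η))) ≤ L) :
    klFin μ ν ≤ L := by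
  classical
  have hηpos : ∀ m : ℕ, (0:ℝ) < 1 / ((m:ℝ) + 1) := fun m => by positivity
  have hη1 : ∀ m : ℕ, (1:ℝ) / ((m:ℝ) + 1) ≤ 1 := fun m => by
    rw [div_le_one (by positivity)]
    linarith [Nat.cast_nonneg (α := ℝ) m]
  set S : ℕ → ℝ := fun m => ∑ x : E, ((μ {x}).toReal * Real.log (μ {x}).toReal
    - (μ {x}).toReal * Real.log ((ν {x}).toReal + 1 / ((m:ℝ) + 1))) with hSdef
  have hSle : ∀ m : ℕ, ENNReal.ofReal (S m) ≤ L := fun m => h _ (hηpos m) (hη1 m)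
  by_cases hac : ∀ x : E, ν {x} = 0 → μ {x} = 0
  · rw [klFin, if_pos hac]
    have htend : Tendsto S atTop (𝓝 (∑ x : E,
        (μ {x}).toReal * Real.log ((μ {x}).toReal / (ν {x}).toReal))) := by
      apply tendsto_finset_sum
      intro x _
      rcases eq_or_lt_of_le (ENNReal.toReal_nonneg : 0 ≤ (μ {x}).toReal) with ha0 | hapos
      · rw [← ha0]
        simpa using (tendsto_const_nhds : Tendsto (fun _ : ℕ => (0:ℝ)) atTop (𝓝 0))
      · have hbν : ν {x} ≠ 0 := by
          intro h0
          rw [hac x h0] at hapos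
          simp at hapos
        have hbpos : 0 < (ν {x}).toReal := ENNReal.toReal_pos hbν (measure_ne_top ν _)
        rw [Real.log_div (ne_of_gt hapos) (ne_of_gt hbpos), mul_sub]
        have h1 : Tendsto (fun m : ℕ => (ν {x}).toReal + 1 / ((m:ℝ) + 1)) atTop
            (𝓝 (ν {x}).toReal) := by
          simpa using tendsto_const_nhds.add (tendsto_one_div_add_atTop_nhds_zero_nat (𝕜 := ℝ))
        have h2 : Tendsto (fun m : ℕ => Real.log ((ν {x}).toReal + 1 / ((m:ℝ) + 1))) atTop
            (𝓝 (Real.log (ν {x}).toReal)) :=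
          ((Real.continuousAt_log (ne_of_gt hbpos)).tendsto).comp h1
        exact tendsto_const_nhds.sub (tendsto_const_nhds.mul h2)
    have htend' : Tendsto (fun m => ENNReal.ofReal (S m)) atTop
        (𝓝 (ENNReal.ofReal (∑ x : E,
          (μ {x}).toReal * Real.log ((μ {x}).toReal / (ν {x}).toReal)))) :=
      (ENNReal.continuous_ofReal.tendsto _).comp htend
    exact le_of_tendsto htend' (Eventually.of_forall hSle)
  · push_neg at hac
    obtain ⟨x₀, hν0, hμ0⟩ := hac
    have ha₀pos : 0 < (μ {x₀}).toReal := ENNReal.toReal_pos hμ0 (measure_ne_top μ _)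
    have hb₀ : (ν {x₀}).toReal = 0 := by rw [hν0]; simp
    have hle1 : ∀ (ρ : Measure E) [IsProbabilityMeasure ρ] (x : E), (ρ {x}).toReal ≤ 1 := by
      intro ρ _ x
      have := prob_le_one (μ := ρ) (s := {x})
      calc (ρ {x}).toReal ≤ (1 : ℝ≥0∞).toReal := ENNReal.toReal_mono (by simp) this
      _ = 1 := by simp
    have hterm_lb : ∀ (m : ℕ) (x : E), -(1 + Real.log 2) ≤
        (μ {x}).toReal * Real.log (μ {x}).toReal
          - (μ {x}).toReal * Real.log ((ν {x}).toReal + 1 / ((m:ℝ) + 1)) := by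
      intro m x
      have ha0 : 0 ≤ (μ {x}).toReal := ENNReal.toReal_nonneg
      have ha1 : (μ {x}).toReal ≤ 1 := hle1 μ x
      have hb0 : 0 ≤ (ν {x}).toReal := ENNReal.toReal_nonneg
      have hb1 : (ν {x}).toReal ≤ 1 := hle1 ν x
      have hlog2 : (0:ℝ) ≤ Real.log 2 := Real.log_nonneg one_le_two
      have part1 : -1 ≤ (μ {x}).toReal * Real.log (μ {x}).toReal := by
        rcases eq_or_lt_of_le ha0 with h0 | hpos
        · rw [← h0]; simp
        · have hlog := Real.one_sub_inv_le_log_of_pos hpos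
          have hmul := mul_le_mul_of_nonneg_left hlog hpos.le
          have heq : (μ {x}).toReal * (1 - ((μ {x}).toReal)⁻¹) = (μ {x}).toReal - 1 := by
            field_simp
          rw [heq] at hmul
          linarith
      have part2 : (μ {x}).toReal * Real.log ((ν {x}).toReal + 1 / ((m:ℝ) + 1)) ≤ Real.log 2 := by
        have hbη : (0:ℝ) < (ν {x}).toReal + 1 / ((m:ℝ) + 1) := by positivity
        have hbη2 : (ν {x}).toReal + 1 / ((m:ℝ) + 1) ≤ 2 := by linarith [hη1 m]
        rcases le_or_gt (Real.log ((ν {x}).toReal + 1 / ((m:ℝ) + 1))) 0 with hn | hp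
        · nlinarith
        · have := Real.log_le_log hbη hbη2
          nlinarith
      linarith
    set C : ℝ := (μ {x₀}).toReal * Real.log (μ {x₀}).toReal
      - (Fintype.card E : ℝ) * (1 + Real.log 2) with hCdef
    have hlb : ∀ m : ℕ, (μ {x₀}).toReal * Real.log ((m:ℝ) + 1) + C ≤ S m := by
      intro m
      have hx0t : (μ {x₀}).toReal * Real.log (μ {x₀}).toReal
          - (μ {x₀}).toReal * Real.log ((ν {x₀}).toReal + 1 / ((m:ℝ) + 1))
          = (μ {x₀}).toReal * Real.log (μ {x₀}).toReal
            + (μ {x₀}).toReal * Real.log ((m:ℝ) + 1) := by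
        rw [hb₀, zero_add, one_div, Real.log_inv]
        ring
      have hsplit : S m = ((μ {x₀}).toReal * Real.log (μ {x₀}).toReal
          - (μ {x₀}).toReal * Real.log ((ν {x₀}).toReal + 1 / ((m:ℝ) + 1)))
          + ∑ x ∈ Finset.univ.erase x₀, ((μ {x}).toReal * Real.log (μ {x}).toReal
            - (μ {x}).toReal * Real.log ((ν {x}).toReal + 1 / ((m:ℝ) + 1))) := by
        rw [hSdef]
        exact (Finset.add_sum_erase _ _ (Finset.mem_univ x₀)).symm
      have hsum_lb : ∑ x ∈ Finset.univ.erase x₀, (-(1 + Real.log 2)) ≤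
          ∑ x ∈ Finset.univ.erase x₀, ((μ {x}).toReal * Real.log (μ {x}).toReal
            - (μ {x}).toReal * Real.log ((ν {x}).toReal + 1 / ((m:ℝ) + 1))) :=
        Finset.sum_le_sum fun x _ => hterm_lb m x
      have hconst : ∑ x ∈ Finset.univ.erase x₀, (-(1 + Real.log 2)) =
          ((Finset.univ.erase x₀).card : ℝ) * (-(1 + Real.log 2)) := by
        rw [Finset.sum_const, nsmul_eq_mul]
      have hcard : ((Finset.univ.erase x₀).card : ℝ) ≤ (Fintype.card E : ℝ) := by
        exact_mod_cast Finset.card_le_card (Finset.erase_subset _ _)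
      have hlog2 : (0:ℝ) ≤ 1 + Real.log 2 := by linarith [Real.log_nonneg (one_le_two (α := ℝ))]
      have hmono : (Fintype.card E : ℝ) * (-(1 + Real.log 2)) ≤
          ((Finset.univ.erase x₀).card : ℝ) * (-(1 + Real.log 2)) := by
        apply mul_le_mul_of_nonpos_right hcard
        linarith
      rw [hsplit, hx0t]
      rw [hconst] at hsum_lb
      rw [hCdef]
      linarith
    have hStop : Tendsto S atTop atTop := by
      apply tendsto_atTop_mono hlb
      apply tendsto_atTop_add_const_right
      apply Tendsto.const_mul_atTop ha₀pos
      exact Real.tendsto_log_atTop.comp (tendsto_atTop_add_const_right _ 1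
        tendsto_natCast_atTop_atTop)
    have htend' : Tendsto (fun m => ENNReal.ofReal (S m)) atTop (𝓝 ∞) :=
      ENNReal.tendsto_ofReal_atTop.comp hStop
    have hkl : klFin μ ν = ∞ := by rw [klFin, if_neg]; push_neg; exact ⟨x₀, hν0, hμ0⟩
    rw [hkl]
    exact le_of_tendsto htend' (Eventually.of_forall hSle)


/-- **Monotone convergence of coarse-grained relative entropy (Deuschel–Stroock)**:
for nested finite measurable partitions of a Polish space whose cells shrink to
points, the coarse-grained relative entropies increase to `h(μ | ν)`. -/
theorem coarseGrained_relEntropy_tendsto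
    {G : Type*} [MetricSpace G] [TopologicalSpace.SeparableSpace G] [CompleteSpace G]
    [MeasurableSpace G] [BorelSpace G]
    (F : ℕ → Type) [∀ c, Fintype (F c)] [∀ c, MeasurableSpace (F c)]
    [∀ c, MeasurableSingletonClass (F c)]
    (f : ∀ c, G → F c) (hf : ∀ c, Measurable (f c))
    -- the partitions are nested
    (hnest : ∀ c, ∃ g : F (c + 1) → F c, f c = g ∘ f (c + 1))
    -- the cell containing any fixed point has diameter tending to 0
    (hdiam : ∀ x : G,
      Tendsto (fun c => EMetric.diam ((f c) ⁻¹' {f c x})) atTop (nhds 0))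
    (μ ν : Measure G) [IsProbabilityMeasure μ] [IsProbabilityMeasure ν] :
    Monotone (fun c => klFin (μ.map (f c)) (ν.map (f c))) ∧
      Tendsto (fun c => klFin (μ.map (f c)) (ν.map (f c))) atTop
        (nhds (relEntropy μ ν)) := by
  classical
  haveI hPμ : ∀ c, IsProbabilityMeasure (μ.map (f c)) :=
    fun c => Measure.isProbabilityMeasure_map (hf c).aemeasurable
  haveI hPν : ∀ c, IsProbabilityMeasure (ν.map (f c)) :=
    fun c => Measure.isProbabilityMeasure_map (hf c).aemeasurable
  have hnest' : ∀ c c', c ≤ c' → ∃ g : F c' → F c, f c = g ∘ f c' := by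
    intro c c' hcc
    induction c', hcc using Nat.le_induction with
    | base => exact ⟨id, rfl⟩
    | succ c' hcc ih =>
      obtain ⟨g, hg⟩ := ih
      obtain ⟨g', hg'⟩ := hnest c'
      exact ⟨g ∘ g', by rw [hg, hg']; rfl⟩
  have hmono : Monotone (fun c => klFin (μ.map (f c)) (ν.map (f c))) := by
    intro c c' hcc
    obtain ⟨g, hg⟩ := hnest' c c' hcc
    have h1 : μ.map (f c) = (μ.map (f c')).map g := by
      rw [Measure.map_map (measurable_of_finite g) (hf c'), ← hg]
    have h2 : ν.map (f c) = (ν.map (f c')).map g := by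
      rw [Measure.map_map (measurable_of_finite g) (hf c'), ← hg]
    simp only []
    rw [h1, h2]
    exact klFin_map_le g _ _
  refine ⟨hmono, ?_⟩
  have hsup := tendsto_atTop_iSup hmono
  suffices hEq : relEntropy μ ν = ⨆ c, klFin (μ.map (f c)) (ν.map (f c)) by
    rw [hEq]; exact hsup
  apply le_antisymm
  · -- hard direction: relEntropy ≤ sup over the partition sequence
    set μ' : Measure G := μ + ν with hμ'def
    haveI : IsFiniteMeasure μ' := by rw [hμ'def]; infer_instance
    -- Approximation of Borel sets by cylinder sets
    have key : ∀ B : Set G, MeasurableSet B → ∀ ε : ℝ≥0∞, 0 < ε →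
        ∃ (c : ℕ) (t : Set (F c)), μ' ((B \ f c ⁻¹' t) ∪ (f c ⁻¹' t \ B)) < ε := by
      intro B hB
      have hB' : MeasurableSet[borel G] B := by
        rw [← BorelSpace.measurable_eq (α := G)]; exact hB
      set P : Set G → Prop := fun B => MeasurableSet B ∧ ∀ ε : ℝ≥0∞, 0 < ε →
        ∃ (c : ℕ) (t : Set (F c)), μ' ((B \ f c ⁻¹' t) ∪ (f c ⁻¹' t \ B)) < ε with hPdef
      have hcylP : ∀ (c : ℕ) (t : Set (F c)), P (f c ⁻¹' t) := by
        intro c t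
        refine ⟨hf c (t.to_countable.measurableSet), fun ε hε => ⟨c, t, ?_⟩⟩
        simp only [Set.diff_self, Set.union_self]
        simpa using hε
      let D : MeasurableSpace G :=
        { MeasurableSet' := P
          measurableSet_empty := by
            have h0 := hcylP 0 ∅
            simpa using h0
          measurableSet_compl := by
            intro s hs
            refine ⟨hs.1.compl, fun ε hε => ?_⟩
            obtain ⟨c, t, hct⟩ := hs.2 ε hε
            refine ⟨c, tᶜ, ?_⟩
            have heq : (sᶜ \ f c ⁻¹' tᶜ) ∪ (f c ⁻¹' tᶜ \ sᶜ) =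
                (s \ f c ⁻¹' t) ∪ (f c ⁻¹' t \ s) := by
              rw [Set.preimage_compl]
              ext x
              by_cases hxs : x ∈ s <;> by_cases hxt : x ∈ f c ⁻¹' t <;> simp [hxs, hxt]
            rwa [heq]
          measurableSet_iUnion := by
            intro s hs
            refine ⟨MeasurableSet.iUnion fun i => (hs i).1, fun ε hε => ?_⟩
            rcases eq_or_ne ε ∞ with rfl | hεtop
            · exact ⟨0, ∅, lt_of_lt_of_le (measure_lt_top μ' _) le_top⟩
            · set ε₁ := ε / 2 with hε₁
              have hε₁ne0 : ε₁ ≠ 0 := by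
                rw [hε₁]; exact (ENNReal.half_pos (ne_of_gt hε)).ne'
              have hε₁netop : ε₁ ≠ ∞ := by
                rw [hε₁]; exact (ENNReal.div_lt_top hεtop (by norm_num)).ne
              set ε₂ := ε₁ / 2 with hε₂
              have hε₂ne0 : ε₂ ≠ 0 := by
                rw [hε₂]; exact (ENNReal.half_pos hε₁ne0).ne'
              have hAccMeas : ∀ K : ℕ, MeasurableSet (Set.accumulate s K) := by
                intro K
                apply MeasurableSet.biUnion (Set.to_countable _)
                exact fun i _ => (hs i).1
              -- find K with small tail
              obtain ⟨K, hK⟩ : ∃ K : ℕ, μ' ((⋃ i, s i) \ Set.accumulate s K) ≤ ε₁ := by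
                set T := μ' (⋃ i, s i) with hT
                have hTne : T ≠ ∞ := measure_ne_top μ' _
                rcases le_or_gt T ε₁ with hTle | hTgt
                · exact ⟨0, le_trans (measure_mono Set.diff_subset) hTle⟩
                · have hacc : T = ⨆ K : ℕ, μ' (Set.accumulate s K) :=
                    measure_iUnion_eq_iSup_accumulate
                  have hlt : T - ε₁ < T :=
                    ENNReal.sub_lt_self hTne (by
                      intro h0; rw [h0] at hTgt; exact absurd hTgt (not_lt.2 (zero_le (a := ε₁))))
                      hε₁ne0
                  rw [hacc] at hlt
                  obtain ⟨K, hK⟩ := lt_iSup_iff.1 hlt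
                  refine ⟨K, ?_⟩
                  have hdiff : μ' ((⋃ i, s i) \ Set.accumulate s K) =
                      T - μ' (Set.accumulate s K) := by
                    rw [hT]
                    exact measure_diff (Set.accumulate_subset_iUnion K)
                      (hAccMeas K).nullMeasurableSet (measure_ne_top μ' _)
                  rw [hdiff]
                  rw [tsub_le_iff_right]
                  rw [← hacc] at hK
                  calc T = T - ε₁ + ε₁ := (tsub_add_cancel_of_le hTgt.le).symm
                  _ ≤ μ' (Set.accumulate s K) + ε₁ := add_le_add_left hK.le _
                  _ = ε₁ + μ' (Set.accumulate s K) := add_comm _ _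
              -- approximate the first K+1 sets
              set ε' := ε₂ / (K + 1) with hε'
              have hε'pos : 0 < ε' := ENNReal.div_pos hε₂ne0 (by simp)
              choose cc tt htt using fun i : ℕ => (hs i).2 ε' hε'pos
              set d := (Finset.range (K + 1)).sup cc with hd
              have hpush : ∀ i : ℕ, i ≤ K → ∃ v : Set (F d),
                  f (cc i) ⁻¹' tt i = f d ⁻¹' v := by
                intro i hi
                obtain ⟨gg, hgg⟩ := hnest' (cc i) d
                  (Finset.le_sup (Finset.mem_range.2 (Nat.lt_succ_of_le hi)))
                exact ⟨gg ⁻¹' tt i, by rw [hgg]; rfl⟩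
              choose v hv using hpush
              set U : Set (F d) := ⋃ i, ⋃ h : i ≤ K, v i h with hU
              refine ⟨d, U, ?_⟩
              have hCU : f d ⁻¹' U = ⋃ i, ⋃ h : i ≤ K, f (cc i) ⁻¹' tt i := by
                rw [Set.preimage_iUnion]
                refine Set.iUnion_congr fun i => ?_
                rw [Set.preimage_iUnion]
                exact Set.iUnion_congr fun h => (hv i h).symm
              have hsubset : ((⋃ i, s i) \ f d ⁻¹' U) ∪ (f d ⁻¹' U \ ⋃ i, s i) ⊆
                  ((⋃ i, s i) \ Set.accumulate s K) ∪
                    ⋃ i ∈ Finset.range (K + 1),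
                      ((s i \ f (cc i) ⁻¹' tt i) ∪ (f (cc i) ⁻¹' tt i \ s i)) := by
                intro x hx
                rcases hx with ⟨hx1, hx2⟩ | ⟨hx1, hx2⟩
                · by_cases hacc : x ∈ Set.accumulate s K
                  · obtain ⟨i, hiK, hxi⟩ := Set.mem_accumulate.1 hacc
                    right
                    refine Set.mem_biUnion (Finset.mem_range.2 (Nat.lt_succ_of_le hiK)) ?_
                    left
                    refine ⟨hxi, fun hmem => hx2 ?_⟩
                    rw [hCU]
                    exact Set.mem_iUnion.2 ⟨i, Set.mem_iUnion.2 ⟨hiK, hmem⟩⟩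
                  · exact Or.inl ⟨hx1, hacc⟩
                · rw [hCU] at hx1
                  obtain ⟨i, hi⟩ := Set.mem_iUnion.1 hx1
                  obtain ⟨hiK, hxi⟩ := Set.mem_iUnion.1 hi
                  right
                  refine Set.mem_biUnion (Finset.mem_range.2 (Nat.lt_succ_of_le hiK)) ?_
                  right
                  exact ⟨hxi, fun hmem => hx2 (Set.mem_iUnion.2 ⟨i, hmem⟩)⟩
              calc μ' (((⋃ i, s i) \ f d ⁻¹' U) ∪ (f d ⁻¹' U \ ⋃ i, s i))
                  ≤ μ' (((⋃ i, s i) \ Set.accumulate s K) ∪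
                    ⋃ i ∈ Finset.range (K + 1),
                      ((s i \ f (cc i) ⁻¹' tt i) ∪ (f (cc i) ⁻¹' tt i \ s i))) :=
                    measure_mono hsubset
                _ ≤ μ' ((⋃ i, s i) \ Set.accumulate s K) +
                    μ' (⋃ i ∈ Finset.range (K + 1),
                      ((s i \ f (cc i) ⁻¹' tt i) ∪ (f (cc i) ⁻¹' tt i \ s i))) :=
                    measure_union_le _ _
                _ ≤ ε₁ + ∑ i ∈ Finset.range (K + 1),
                    μ' ((s i \ f (cc i) ⁻¹' tt i) ∪ (f (cc i) ⁻¹' tt i \ s i)) :=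
                    add_le_add hK (measure_biUnion_finset_le _ _)
                _ ≤ ε₁ + ∑ i ∈ Finset.range (K + 1), ε' :=
                    add_le_add_right (Finset.sum_le_sum fun i _ => (htt i).le) _
                _ = ε₁ + (K + 1) * ε' := by
                    rw [Finset.sum_const, Finset.card_range, nsmul_eq_mul]
                    norm_num
                _ = ε₁ + ε₂ := by
                    rw [hε']
                    congr 1
                    exact ENNReal.mul_div_cancel' (by simp) (by simp)
                _ < ε₁ + ε₁ := by
                    exact ENNReal.add_lt_add_left hε₁netop
                      (by rw [hε₂]; exact ENNReal.half_lt_self hε₁ne0 hε₁netop)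
                _ = ε := by rw [hε₁]; exact ENNReal.add_halves ε }
      have hgenle : borel G ≤ D := by
        rw [borel]
        apply MeasurableSpace.generateFrom_le
        intro U hU
        have hUopen : IsOpen U := hU
        have hcover : U = ⋃₀ {V : Set G | (∃ (c : ℕ) (t : Set (F c)), V = f c ⁻¹' t) ∧ V ⊆ U} := by
          apply Set.Subset.antisymm
          · intro x hx
            obtain ⟨εr, hεr, hball⟩ := Metric.isOpen_iff.1 hUopen x hx
            have hev : ∀ᶠ c in atTop,
                EMetric.diam (f c ⁻¹' {f c x}) < ENNReal.ofReal εr :=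
              (hdiam x).eventually (Iio_mem_nhds (ENNReal.ofReal_pos.2 hεr))
            obtain ⟨c, hc⟩ := hev.exists
            refine Set.mem_sUnion.2 ⟨f c ⁻¹' {f c x}, ⟨⟨c, {f c x}, rfl⟩, ?_⟩, rfl⟩
            intro y hy
            apply hball
            rw [Metric.mem_ball]
            have hd : edist y x ≤ EMetric.diam (f c ⁻¹' {f c x}) :=
              EMetric.edist_le_diam_of_mem hy rfl
            exact edist_lt_ofReal.1 (lt_of_le_of_lt hd hc)
          · intro x hx
            obtain ⟨V, ⟨_, hVU⟩, hxV⟩ := hx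
            exact hVU hxV
        have hctble : {V : Set G | (∃ (c : ℕ) (t : Set (F c)), V = f c ⁻¹' t) ∧ V ⊆ U}.Countable := by
          apply Set.Countable.mono ?_
            (Set.countable_iUnion fun c : ℕ =>
              Set.countable_range fun t : Set (F c) => f c ⁻¹' t)
          intro V hV
          obtain ⟨⟨c, t, rfl⟩, -⟩ := hV
          exact Set.mem_iUnion.2 ⟨c, ⟨t, rfl⟩⟩
        rw [hcover]
        apply MeasurableSet.sUnion hctble
        intro V hV
        obtain ⟨⟨c, t, rfl⟩, -⟩ := hV
        exact hcylP c t
      exact (hgenle B hB').2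
    -- main argument
    rw [relEntropy]
    refine iSup_le fun n => iSup_le fun g => iSup_le fun hg => ?_
    haveI : IsProbabilityMeasure (μ.map g) := Measure.isProbabilityMeasure_map hg.aemeasurable
    haveI : IsProbabilityMeasure (ν.map g) := Measure.isProbabilityMeasure_map hg.aemeasurable
    have hGne : Nonempty G := by
      by_contra hempty
      rw [not_nonempty_iff] at hempty
      have h0 : μ Set.univ = 0 := by
        rw [Set.univ_eq_empty_iff.2 hempty]
        exact measure_empty
      rw [measure_univ] at h0
      exact one_ne_zero h0
    have i₀ : Fin n := g (Classical.arbitrary G)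
    have happrox : ∀ ε : ℝ≥0∞, 0 < ε → ε ≠ ∞ → ∃ (c : ℕ) (k : F c → Fin n),
        μ' {x | g x ≠ k (f c x)} ≤ ε := by
      intro ε hε hεtop
      set ε' := ε / (n + 1) with hε'
      have hε'pos : 0 < ε' := ENNReal.div_pos (ne_of_gt hε) (by simp)
      choose cc tt htt using fun i : Fin n =>
        key (g ⁻¹' {i}) (hg (measurableSet_singleton i)) ε' hε'pos
      set d := Finset.univ.sup cc with hd
      have hpush : ∀ i : Fin n, ∃ u : Set (F d), f (cc i) ⁻¹' tt i = f d ⁻¹' u := by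
        intro i
        obtain ⟨gg, hgg⟩ := hnest' (cc i) d (Finset.le_sup (Finset.mem_univ i))
        exact ⟨gg ⁻¹' tt i, by rw [hgg]; rfl⟩
      choose u hu using hpush
      set k : F d → Fin n := fun y => if h : ∃ i : Fin n, y ∈ u i then h.choose else i₀ with hk
      refine ⟨d, k, ?_⟩
      have hsub : {x | g x ≠ k (f d x)} ⊆
          ⋃ i : Fin n, ((g ⁻¹' {i} \ f d ⁻¹' u i) ∪ (f d ⁻¹' u i \ g ⁻¹' {i})) := by
        intro x hx
        by_cases hex : ∃ i : Fin n, f d x ∈ u i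
        · have hxk : f d x ∈ u (k (f d x)) := by
            rw [hk]
            simp only [dif_pos hex]
            exact hex.choose_spec
          refine Set.mem_iUnion.2 ⟨k (f d x), Or.inr ⟨hxk, ?_⟩⟩
          simp only [Set.mem_preimage, Set.mem_singleton_iff]
          exact hx
        · push_neg at hex
          refine Set.mem_iUnion.2 ⟨g x, Or.inl ⟨rfl, ?_⟩⟩
          exact fun hmem => hex (g x) hmem
      calc μ' {x | g x ≠ k (f d x)}
          ≤ ∑' i : Fin n, μ' ((g ⁻¹' {i} \ f d ⁻¹' u i) ∪ (f d ⁻¹' u i \ g ⁻¹' {i})) :=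
            le_trans (measure_mono hsub) (measure_iUnion_le _)
        _ = ∑ i : Fin n, μ' ((g ⁻¹' {i} \ f d ⁻¹' u i) ∪ (f d ⁻¹' u i \ g ⁻¹' {i})) :=
            tsum_fintype _
        _ ≤ ∑ _i : Fin n, ε' := by
            refine Finset.sum_le_sum fun i _ => ?_
            rw [← hu i]
            exact (htt i).le
        _ = n * ε' := by
            rw [Finset.sum_const, Finset.card_univ, Fintype.card_fin, nsmul_eq_mul]
        _ ≤ (n + 1) * ε' := by
            apply mul_le_mul_left
            exact le_self_add
        _ = ε := by
            rw [hε']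
            exact ENNReal.mul_div_cancel' (by simp) (by simp)
    apply klFin_le_of_smoothed_le
    intro η hηpos hη1
    have hofpos : ∀ m : ℕ, (0:ℝ≥0∞) < ENNReal.ofReal (1 / ((m:ℝ) + 1)) :=
      fun m => ENNReal.ofReal_pos.2 (by positivity)
    choose cs ks hks using fun m : ℕ =>
      happrox (ENNReal.ofReal (1 / ((m:ℝ) + 1))) (hofpos m) ENNReal.ofReal_ne_top
    set h' : ℕ → G → Fin n := fun m x => ks m (f (cs m) x) with hh'
    have hh'meas : ∀ m, Measurable (h' m) :=
      fun m => (measurable_of_finite (ks m)).comp (hf (cs m))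
    haveI hPμ' : ∀ m, IsProbabilityMeasure (μ.map (h' m)) :=
      fun m => Measure.isProbabilityMeasure_map (hh'meas m).aemeasurable
    haveI hPν' : ∀ m, IsProbabilityMeasure (ν.map (h' m)) :=
      fun m => Measure.isProbabilityMeasure_map (hh'meas m).aemeasurable
    have hklm : ∀ m, klFin (μ.map (h' m)) (ν.map (h' m)) ≤
        ⨆ c, klFin (μ.map (f c)) (ν.map (f c)) := by
      intro m
      have h1 : μ.map (h' m) = (μ.map (f (cs m))).map (ks m) := by
        rw [Measure.map_map (measurable_of_finite _) (hf _)]; rfl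
      have h2 : ν.map (h' m) = (ν.map (f (cs m))).map (ks m) := by
        rw [Measure.map_map (measurable_of_finite _) (hf _)]; rfl
      rw [h1, h2]
      exact le_trans (klFin_map_le _ _ _) (le_iSup (fun c => klFin (μ.map (f c)) (ν.map (f c))) (cs m))
    have habs : ∀ (ρ : Measure G), ρ ≤ μ' → IsProbabilityMeasure ρ → ∀ (m : ℕ) (i : Fin n),
        |((ρ.map (h' m)) {i}).toReal - ((ρ.map g) {i}).toReal| ≤ 1 / ((m:ℝ) + 1) := by
      intro ρ hρ hρP m i
      haveI := hρP
      have hmapA : (ρ.map (h' m)) {i} = ρ ((h' m) ⁻¹' {i}) :=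
        Measure.map_apply (hh'meas m) (measurableSet_singleton i)
      have hmapB : (ρ.map g) {i} = ρ (g ⁻¹' {i}) :=
        Measure.map_apply hg (measurableSet_singleton i)
      set Dm := {x | g x ≠ h' m x} with hDm
      have hDb : ρ Dm ≤ ENNReal.ofReal (1 / ((m:ℝ) + 1)) := le_trans (hρ Dm) (hks m)
      have hDreal : (ρ Dm).toReal ≤ 1 / ((m:ℝ) + 1) := by
        calc (ρ Dm).toReal ≤ (ENNReal.ofReal (1 / ((m:ℝ) + 1))).toReal :=
          ENNReal.toReal_mono ENNReal.ofReal_ne_top hDb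
        _ = 1 / ((m:ℝ) + 1) := ENNReal.toReal_ofReal (by positivity)
      have hABD : (h' m) ⁻¹' {i} ⊆ g ⁻¹' {i} ∪ Dm := by
        intro x hx
        by_cases hgx : g x = h' m x
        · left
          simp only [Set.mem_preimage, Set.mem_singleton_iff] at hx ⊢
          rw [hgx]; exact hx
        · exact Or.inr hgx
      have hBAD : g ⁻¹' {i} ⊆ (h' m) ⁻¹' {i} ∪ Dm := by
        intro x hx
        by_cases hgx : g x = h' m x
        · left
          simp only [Set.mem_preimage, Set.mem_singleton_iff] at hx ⊢
          rw [← hgx]; exact hx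
        · exact Or.inr hgx
      have h1 : (ρ ((h' m) ⁻¹' {i})).toReal ≤ (ρ (g ⁻¹' {i})).toReal + (ρ Dm).toReal := by
        rw [← ENNReal.toReal_add (measure_ne_top ρ _) (measure_ne_top ρ _)]
        exact ENNReal.toReal_mono
          (ENNReal.add_ne_top.2 ⟨measure_ne_top ρ _, measure_ne_top ρ _⟩)
          (le_trans (measure_mono hABD) (measure_union_le _ _))
      have h2 : (ρ (g ⁻¹' {i})).toReal ≤ (ρ ((h' m) ⁻¹' {i})).toReal + (ρ Dm).toReal := by
        rw [← ENNReal.toReal_add (measure_ne_top ρ _) (measure_ne_top ρ _)]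
        exact ENNReal.toReal_mono
          (ENNReal.add_ne_top.2 ⟨measure_ne_top ρ _, measure_ne_top ρ _⟩)
          (le_trans (measure_mono hBAD) (measure_union_le _ _))
      rw [hmapA, hmapB, abs_sub_le_iff]
      constructor <;> linarith
    have hcoord : ∀ (ρ : Measure G), ρ ≤ μ' → IsProbabilityMeasure ρ → ∀ i : Fin n,
        Tendsto (fun m => ((ρ.map (h' m)) {i}).toReal) atTop
          (𝓝 (((ρ.map g) {i}).toReal)) := by
      intro ρ hρ hρP i
      rw [tendsto_iff_dist_tendsto_zero]
      apply squeeze_zero (fun m => dist_nonneg) (fun m => ?_)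
        tendsto_one_div_add_atTop_nhds_zero_nat
      rw [Real.dist_eq]
      exact habs ρ hρ hρP m i
    have hcoordμ := hcoord μ (Measure.le_add_right le_rfl) inferInstance
    have hcoordν := hcoord ν (Measure.le_add_left le_rfl) inferInstance
    have hSm : Tendsto (fun m => ∑ i : Fin n,
        (((μ.map (h' m)) {i}).toReal * Real.log ((μ.map (h' m)) {i}).toReal
          - ((μ.map (h' m)) {i}).toReal * Real.log (((ν.map (h' m)) {i}).toReal + η)))
        atTop (𝓝 (∑ i : Fin n,
          (((μ.map g) {i}).toReal * Real.log ((μ.map g) {i}).toReal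
            - ((μ.map g) {i}).toReal * Real.log (((ν.map g) {i}).toReal + η)))) := by
      apply tendsto_finset_sum
      intro i _
      have h1 := hcoordμ i
      have h2 := hcoordν i
      have hb : 0 ≤ ((ν.map g) {i}).toReal := ENNReal.toReal_nonneg
      refine Tendsto.sub ?_ ?_
      · exact (Real.continuous_mul_log.tendsto _).comp h1
      · refine h1.mul ?_
        have h3 : Tendsto (fun m => ((ν.map (h' m)) {i}).toReal + η) atTop
            (𝓝 (((ν.map g) {i}).toReal + η)) := h2.add_const η
        exact ((Real.continuousAt_log (by positivity)).tendsto).comp h3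
    have hofReal := (ENNReal.continuous_ofReal.tendsto _).comp hSm
    apply le_of_tendsto hofReal
    apply Eventually.of_forall
    intro m
    exact le_trans (ofReal_smoothed_le_klFin (μ.map (h' m)) (ν.map (h' m)) hηpos) (hklm m)
  · -- easy direction: sup over the sequence ≤ relEntropy
    apply iSup_le
    intro c
    set e := Fintype.equivFin (F c) with he
    have hcomp : Measurable (fun x => e (f c x)) := (measurable_of_finite ⇑e).comp (hf c)
    haveI : IsProbabilityMeasure (μ.map (fun x => e (f c x))) :=
      Measure.isProbabilityMeasure_map hcomp.aemeasurable
    haveI : IsProbabilityMeasure (ν.map (fun x => e (f c x))) :=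
      Measure.isProbabilityMeasure_map hcomp.aemeasurable
    have h1 : μ.map (f c) = (μ.map (fun x => e (f c x))).map ⇑e.symm := by
      rw [Measure.map_map (measurable_of_finite ⇑e.symm) hcomp]
      congr 1
      funext x
      simp
    have h2 : ν.map (f c) = (ν.map (fun x => e (f c x))).map ⇑e.symm := by
      rw [Measure.map_map (measurable_of_finite ⇑e.symm) hcomp]
      congr 1
      funext x
      simp
    calc klFin (μ.map (f c)) (ν.map (f c))
        = klFin ((μ.map (fun x => e (f c x))).map ⇑e.symm)
            ((ν.map (fun x => e (f c x))).map ⇑e.symm) := by rw [h1, h2]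
      _ ≤ klFin (μ.map (fun x => e (f c x))) (ν.map (fun x => e (f c x))) :=
          klFin_map_le _ _ _
      _ ≤ relEntropy μ ν := by
          rw [relEntropy]
          refine le_iSup_of_le (Fintype.card (F c)) ?_
          refine le_iSup_of_le (fun x => e (f c x)) ?_
          exact le_iSup_of_le hcomp le_rfl

end
end

section
/- Overlap bound for distinct-type blocks: fix M' ∈ ℕ and ε₃ ∈ (0,1), and for r = 1,...,R let W_{r,M'} be the set of sentences ζ ∈ Ẽ^{M'} in which sentences of type r start at more than (1−ε₃/2)M' of the positions (frequency of V_r-patterns exceeds 1−ε₃/2), where the pattern sets V_r, r=1,...,R, are pairwise disjoint. Then for r ≠ r', any ζ ∈ W_{r,M'} and η ∈ W_{r',M'} satisfy: the longest k such that the k-suffix of ζ equals the k-prefix of η is at most ε₃ M'. -/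
open scoped Classical

noncomputable section

/-- The number of positions `i < M'` of the sentence `ζ` at which a subsentence
belonging to `V` starts (the subsentence of length `M̃` beginning at `i`). -/
def startCount {W : Type*} (Mt : ℕ) (V : Set (List W)) (ζ : List W) : ℕ :=
  ((Finset.range ζ.length).filter fun i => (ζ.drop i).take Mt ∈ V).card

/-- **Overlap bound for blocks of distinct type**: if the pattern sets
`V r` are pairwise disjoint sets of sentences of length `M̃`, and `ζ, η` are
sentences of length `M'` in which patterns of types `r ≠ r'` respectively start at
more than `(1-ε₃/2)M'` positions, then the longest `k` such that the `k`-suffix of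
`ζ` equals the `k`-prefix of `η` satisfies `k ≤ ε₃ M'`. -/
theorem overlap_bound
    {W : Type*} (R : ℕ) (Mt M' : ℕ) (hM : Mt ≤ M')
    (V : Fin R → Set (List W))
    (hlen : ∀ r, ∀ z ∈ V r, z.length = Mt)
    (hdisj : ∀ r r', r ≠ r' → Disjoint (V r) (V r'))
    (ε₃ : ℝ) (hε₃ : ε₃ ∈ Set.Ioo (0 : ℝ) 1)
    (r r' : Fin R) (hrr' : r ≠ r')
    (ζ η : List W) (hζlen : ζ.length = M') (hηlen : η.length = M')
    (hζ : (1 - ε₃ / 2) * M' < (startCount Mt (V r) ζ : ℝ))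
    (hη : (1 - ε₃ / 2) * M' < (startCount Mt (V r') η : ℝ))
    (k : ℕ) (hk : k ≤ M')
    (hoverlap : ζ.drop (M' - k) = η.take k) :
    (k : ℝ) ≤ ε₃ * M' := by

  obtain ⟨hε0, hε1⟩ := hε₃
  set A := (Finset.range k).filter (fun j => (η.drop j).take Mt ∈ V r) with hA
  set B := (Finset.range k).filter (fun j => (η.drop j).take Mt ∈ V r') with hB
  -- key: patterns of ζ starting in the overlap correspond to patterns of η
  have key : ∀ i, i < M' → M' - k ≤ i → (ζ.drop i).take Mt ∈ V r →
      (η.drop (i - (M' - k))).take Mt ∈ V r := by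
    intro i hi hik hmem
    have hMti : Mt ≤ M' - i := by
      have := hlen r _ hmem
      rw [List.length_take, List.length_drop, hζlen] at this
      omega
    have h1 : ζ.drop i = (η.drop (i - (M' - k))).take (k - (i - (M' - k))) := by
      have : ζ.drop i = (ζ.drop (M' - k)).drop (i - (M' - k)) := by
        rw [List.drop_drop]; congr 1; omega
      rw [this, hoverlap, List.drop_take]
    have h2 : (ζ.drop i).take Mt = (η.drop (i - (M' - k))).take Mt := by
      rw [h1, List.take_take]
      congr 1
      omega
    rwa [h2] at hmem
  have hAcard : startCount Mt (V r) ζ ≤ (M' - k) + A.card := by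
    have hsub : (Finset.range ζ.length).filter (fun i => (ζ.drop i).take Mt ∈ V r)
        ⊆ Finset.range (M' - k) ∪ A.image (fun j => j + (M' - k)) := by
      intro i hi
      simp only [Finset.mem_filter, Finset.mem_range, hζlen] at hi
      rcases lt_or_ge i (M' - k) with h | h
      · exact Finset.mem_union_left _ (Finset.mem_range.2 h)
      · refine Finset.mem_union_right _ (Finset.mem_image.2 ⟨i - (M' - k), ?_, by omega⟩)
        simp only [hA, Finset.mem_filter, Finset.mem_range]
        exact ⟨by omega, key i hi.1 h hi.2⟩
    calc startCount Mt (V r) ζ ≤ (Finset.range (M' - k) ∪ A.image (fun j => j + (M' - k))).card :=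
          Finset.card_le_card hsub
      _ ≤ (M' - k) + A.card := by
          refine le_trans (Finset.card_union_le _ _) ?_
          have h1 : (A.image (fun j => j + (M' - k))).card ≤ A.card :=
            Finset.card_image_le
          simp only [Finset.card_range]
          omega
  have hBcard : startCount Mt (V r') η ≤ (M' - k) + B.card := by
    have hsub : (Finset.range η.length).filter (fun i => (η.drop i).take Mt ∈ V r')
        ⊆ B ∪ Finset.Ico k M' := by
      intro i hi
      simp only [Finset.mem_filter, Finset.mem_range, hηlen] at hi
      rcases lt_or_ge i k with h | h
      · exact Finset.mem_union_left _ (by simp [hB, Finset.mem_filter, h, hi.2])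
      · exact Finset.mem_union_right _ (Finset.mem_Ico.2 ⟨h, hi.1⟩)
    calc startCount Mt (V r') η ≤ (B ∪ Finset.Ico k M').card := Finset.card_le_card hsub
      _ ≤ B.card + (M' - k) := by
          refine le_trans (Finset.card_union_le _ _) ?_
          simp [Nat.card_Ico]
      _ = (M' - k) + B.card := by omega
  have hABdisj : Disjoint A B := by
    rw [Finset.disjoint_left]
    intro j hjA hjB
    simp only [hA, hB, Finset.mem_filter] at hjA hjB
    exact Set.disjoint_left.1 (hdisj r r' hrr') hjA.2 hjB.2
  have hABk : A.card + B.card ≤ k := by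
    rw [← Finset.card_union_of_disjoint hABdisj]
    refine le_trans (Finset.card_le_card (Finset.union_subset ?_ ?_)) (le_of_eq (Finset.card_range k))
    · exact Finset.filter_subset _ _
    · exact Finset.filter_subset _ _
  have hsumN : startCount Mt (V r) ζ + startCount Mt (V r') η ≤ 2 * (M' - k) + k := by omega
  have hsumR : (startCount Mt (V r) ζ : ℝ) + startCount Mt (V r') η ≤ 2 * ((M' : ℝ) - k) + k := by
    calc (startCount Mt (V r) ζ : ℝ) + startCount Mt (V r') η
        ≤ ((2 * (M' - k) + k : ℕ) : ℝ) := by exact_mod_cast hsumN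
      _ = 2 * ((M' : ℝ) - k) + k := by push_cast [Nat.cast_sub hk]; ring
  linarith


end
end
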